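/- arXiv:1510.07821 — 10 statements merged into one kernel-verified Lean document; each statement's English description precedes it below -/
import Mathlib

section
/- Let P : ℝⁿ → ℝ be ρ-weakly convex, f : ℝⁿ → ℝ differentiable and ρ-strongly convex, and α > 0 with αρ < 1. Then x = T_α(x − α∇f(x)) if and only if x is a global minimizer of f + P, where T_α(z) = argmin_t (1/(2α))‖t − z‖² + P(t). -/
open Set

local notation "⟪" x ", " y "⟫" => @inner ℝ _ _ x y

section Aux

variable {E : Type*} [NormedAddCommGroup E] [InnerProductSpace ℝ E]

lemma aux_slope_le {φ : ℝ → ℝ} {d c : ℝ} (hd : HasDerivAt φ d 0)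
    (h : ∀ l ∈ Set.Ioc (0:ℝ) 1, (φ l - φ 0) / l ≤ c) : d ≤ c := by
  have ht : Filter.Tendsto (slope φ 0) (nhdsWithin 0 (Set.Ioi 0)) (nhds d) :=
    (hasDerivAt_iff_tendsto_slope.mp hd).mono_left
      (nhdsWithin_mono 0 (fun y hy => ne_of_gt hy))
  refine le_of_tendsto ht ?_
  filter_upwards [Ioc_mem_nhdsGT (zero_lt_one)] with l hl
  rw [slope_def_field]
  simpa using h l hl

lemma aux_slope_ge {φ : ℝ → ℝ} {d c : ℝ} (hd : HasDerivAt φ d 0)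
    (h : ∀ l ∈ Set.Ioc (0:ℝ) 1, c ≤ (φ l - φ 0) / l) : c ≤ d := by
  have ht : Filter.Tendsto (slope φ 0) (nhdsWithin 0 (Set.Ioi 0)) (nhds d) :=
    (hasDerivAt_iff_tendsto_slope.mp hd).mono_left
      (nhdsWithin_mono 0 (fun y hy => ne_of_gt hy))
  refine ge_of_tendsto ht ?_
  filter_upwards [Ioc_mem_nhdsGT (zero_lt_one)] with l hl
  rw [slope_def_field]
  simpa using h l hl

lemma aux_hasDerivAt_line [CompleteSpace E] {g : E → ℝ} {G x : E}
    (hg : HasGradientAt g G x) (v : E) :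
    HasDerivAt (fun l : ℝ => g (x + l • v)) ⟪G, v⟫ 0 := by
  have hline : HasDerivAt (fun l : ℝ => x + l • v) v 0 := by
    simpa using ((hasDerivAt_id (0:ℝ)).smul_const v).const_add x
  have hF : HasFDerivAt g ((InnerProductSpace.toDual ℝ E) G) ((fun l : ℝ => x + l • v) 0) := by
    simpa using hg.hasFDerivAt
  have := hF.comp_hasDerivAt 0 hline
  simp at this
  exact this

lemma aux_sq_smul (l : ℝ) (v : E) : ‖l • v‖ ^ 2 = l ^ 2 * ‖v‖ ^ 2 := by
  rw [norm_smul, mul_pow, Real.norm_eq_abs, sq_abs]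

lemma aux_hasDerivAt_norm_line (x v : E) :
    HasDerivAt (fun l : ℝ => ‖x + l • v‖ ^ 2) (2 * ⟪x, v⟫) 0 := by
  have heq : (fun l : ℝ => ‖x + l • v‖ ^ 2)
      = fun l : ℝ => ‖x‖ ^ 2 + 2 * ⟪x, v⟫ * l + ‖v‖ ^ 2 * l ^ 2 := by
    funext l
    have h1 : ‖x + l • v‖ ^ 2 = ‖x‖ ^ 2 + 2 * ⟪x, l • v⟫ + ‖l • v‖ ^ 2 :=
      norm_add_sq_real x (l • v)
    have h2 : ⟪x, l • v⟫ = l * ⟪x, v⟫ := real_inner_smul_right x v l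
    rw [h1, h2, aux_sq_smul]; ring
  rw [heq]
  have h := ((hasDerivAt_const (0:ℝ) (‖x‖^2)).add
      (((hasDerivAt_id (0:ℝ)).const_mul (2 * ⟪x, v⟫)))).add
      ((hasDerivAt_pow 2 (0:ℝ)).const_mul (‖v‖^2))
  simp at h
  exact h

lemma aux_norm_combo (x t : E) (l : ℝ) :
    ‖(1 - l) • x + l • t‖ ^ 2
      = (1 - l) * ‖x‖ ^ 2 + l * ‖t‖ ^ 2 - l * (1 - l) * ‖t - x‖ ^ 2 := by
  have h1 : ‖(1 - l) • x + l • t‖ ^ 2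
      = ‖(1 - l) • x‖ ^ 2 + 2 * ⟪(1 - l) • x, l • t⟫ + ‖l • t‖ ^ 2 :=
    norm_add_sq_real _ _
  have h2 : ⟪(1 - l) • x, l • t⟫ = (1 - l) * (l * ⟪x, t⟫) := by
    rw [real_inner_smul_left, real_inner_smul_right]
  have h5 : ‖t - x‖ ^ 2 = ‖t‖ ^ 2 - 2 * ⟪t, x⟫ + ‖x‖ ^ 2 := norm_sub_sq_real t x
  have h6 : ⟪t, x⟫ = ⟪x, t⟫ := real_inner_comm x t
  rw [h1, h2, aux_sq_smul, aux_sq_smul, h5, h6]; ring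

lemma aux_grad_ineq {g : E → ℝ} (hg : ConvexOn ℝ univ g) (x v : E) {d : ℝ}
    (hd : HasDerivAt (fun l : ℝ => g (x + l • v)) d 0) : g x + d ≤ g (x + v) := by
  have key : d ≤ g (x + v) - g x := by
    apply aux_slope_le hd
    intro l hl
    have hcomb : x + l • v = (1 - l) • x + l • (x + v) := by
      rw [sub_smul, one_smul, smul_add]; abel
    have hc := hg.2 (mem_univ x) (mem_univ (x + v))
      (by linarith [hl.2] : (0:ℝ) ≤ 1 - l) hl.1.le (by ring)
    simp only [smul_eq_mul] at hc
    rw [div_le_iff₀ hl.1]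
    have h0 : x + (0:ℝ) • v = x := by simp
    rw [h0, hcomb]
    linarith [hc]
  linarith

end Aux

set_option maxHeartbeats 1000000 in
theorem ista_fixed_point_iff_minimizer
    (n : ℕ)
    (P f : EuclideanSpace ℝ (Fin n) → ℝ)
    (f' : EuclideanSpace ℝ (Fin n) → EuclideanSpace ℝ (Fin n))
    (hf' : ∀ x, HasGradientAt f (f' x) x)
    (ρ α : ℝ) (hρ : 0 ≤ ρ) (hα : 0 < α) (hαρ : α * ρ < 1)
    (hweak : ConvexOn ℝ univ (fun x => P x + ρ / 2 * ‖x‖ ^ 2))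
    (hstrong : ConvexOn ℝ univ (fun x => f x - ρ / 2 * ‖x‖ ^ 2))
    (T : EuclideanSpace ℝ (Fin n) → EuclideanSpace ℝ (Fin n))
    (hT : ∀ z t, 1 / (2 * α) * ‖T z - z‖ ^ 2 + P (T z) ≤ 1 / (2 * α) * ‖t - z‖ ^ 2 + P t)
    (hTuniq : ∀ z t,
      (∀ s, 1 / (2 * α) * ‖t - z‖ ^ 2 + P t ≤ 1 / (2 * α) * ‖s - z‖ ^ 2 + P s) → t = T z)
    (x : EuclideanSpace ℝ (Fin n)) :
    x = T (x - α • f' x) ↔ ∀ z, f x + P x ≤ f z + P z := by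
  set G := f' x with hG
  set z := x - α • G with hz
  -- algebraic identity for the prox objective
  have halg : ∀ t : EuclideanSpace ℝ (Fin n),
      1 / (2 * α) * ‖t - z‖ ^ 2
        = 1 / (2 * α) * ‖t - x‖ ^ 2 + ⟪G, t - x⟫ + α / 2 * ‖G‖ ^ 2 := by
    intro t
    have h1 : t - z = (t - x) + α • G := by rw [hz]; abel
    rw [h1, norm_add_sq_real]
    have h2 : ⟪t - x, α • G⟫ = α * ⟪t - x, G⟫ := real_inner_smul_right _ _ _
    have hc : ⟪G, t - x⟫ = ⟪t - x, G⟫ := real_inner_comm (t - x) G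
    rw [h2, aux_sq_smul, hc]
    field_simp
  have halgx : 1 / (2 * α) * ‖x - z‖ ^ 2 = α / 2 * ‖G‖ ^ 2 := by
    have := halg x
    simpa using this
  -- weak convexity of P in usable form
  have hweakP : ∀ (t : EuclideanSpace ℝ (Fin n)) (l : ℝ), 0 ≤ l → l ≤ 1 →
      P (x + l • (t - x))
        ≤ (1 - l) * P x + l * P t + ρ / 2 * (l * (1 - l)) * ‖t - x‖ ^ 2 := by
    intro t l hl0 hl1
    have hcomb : x + l • (t - x) = (1 - l) • x + l • t := by
      rw [sub_smul, one_smul, smul_sub]; abel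
    have hc := hweak.2 (mem_univ x) (mem_univ t)
      (by linarith : (0:ℝ) ≤ 1 - l) hl0 (by ring)
    simp only [smul_eq_mul] at hc
    rw [aux_norm_combo x t l] at hc
    rw [hcomb]
    linarith [hc]
  -- strong convexity bound for f
  have hsb : ∀ t : EuclideanSpace ℝ (Fin n),
      f x + ⟪G, t - x⟫ + ρ / 2 * ‖t - x‖ ^ 2 ≤ f t := by
    intro t
    have hd1 : HasDerivAt (fun l : ℝ => f (x + l • (t - x))) ⟪G, t - x⟫ 0 :=
      aux_hasDerivAt_line (hf' x) (t - x)
    have hd2 : HasDerivAt (fun l : ℝ => ‖x + l • (t - x)‖ ^ 2) (2 * ⟪x, t - x⟫) 0 :=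
      aux_hasDerivAt_norm_line x (t - x)
    have hd : HasDerivAt
        (fun l : ℝ => f (x + l • (t - x)) - ρ / 2 * ‖x + l • (t - x)‖ ^ 2)
        (⟪G, t - x⟫ - ρ / 2 * (2 * ⟪x, t - x⟫)) 0 := hd1.sub (hd2.const_mul (ρ / 2))
    have hgi := aux_grad_ineq hstrong x (t - x) hd
    simp only [add_sub_cancel] at hgi
    have h6 : ⟪x, t - x⟫ = ⟪x, t⟫ - ⟪x, x⟫ := inner_sub_right x t x
    have h7 : ⟪x, x⟫ = ‖x‖ ^ 2 := real_inner_self_eq_norm_sq x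
    rw [h6, h7] at hgi
    have h5 : ‖t - x‖ ^ 2 = ‖t‖ ^ 2 - 2 * ⟪t, x⟫ + ‖x‖ ^ 2 := norm_sub_sq_real t x
    have h8 : ⟪t, x⟫ = ⟪x, t⟫ := real_inner_comm x t
    rw [h5, h8]
    linarith [hgi]
  have hρα : ρ / 2 ≤ 1 / (2 * α) := by
    rw [div_le_div_iff₀ (by norm_num) (by linarith)]
    nlinarith
  constructor
  · -- fixed point → minimizer
    intro hfix t
    have hkey : ∀ s : EuclideanSpace ℝ (Fin n),
        P x ≤ P s + ⟪G, s - x⟫ + 1 / (2 * α) * ‖s - x‖ ^ 2 := by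
      intro s
      have h := hT z s
      rw [← hfix] at h
      rw [halg s, halgx] at h
      linarith
    -- step: P x ≤ P t + ⟪G, t-x⟫ + ρ/2 ‖t-x‖²
    have hstep : P x ≤ P t + ⟪G, t - x⟫ + ρ / 2 * ‖t - x‖ ^ 2 := by
      refine le_of_forall_pos_le_add ?_
      intro ε hε
      obtain ⟨c, hcdef⟩ : ∃ c : ℝ, c = (1 / (2 * α) - ρ / 2) * ‖t - x‖ ^ 2 := ⟨_, rfl⟩
      have hc0 : 0 ≤ c := by
        rw [hcdef]; exact mul_nonneg (by linarith) (sq_nonneg _)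
      obtain ⟨l, hldef⟩ : ∃ l : ℝ, l = min 1 (ε / (c + 1)) := ⟨_, rfl⟩
      have hl0 : 0 < l := by
        rw [hldef]; exact lt_min one_pos (div_pos hε (by linarith))
      have hl1 : l ≤ 1 := by rw [hldef]; exact min_le_left _ _
      have h1 : l ≤ ε / (c + 1) := by rw [hldef]; exact min_le_right _ _
      have h1' : l * (c + 1) ≤ ε := (le_div_iff₀ (by linarith)).mp h1
      have hlc : l * c ≤ ε := by nlinarith [hl0.le, hc0]
      have hk := hkey (x + l • (t - x))
      have hA : (x + l • (t - x)) - x = l • (t - x) := by abel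
      have hB : ⟪G, l • (t - x)⟫ = l * ⟪G, t - x⟫ := real_inner_smul_right _ _ _
      rw [hA, hB, aux_sq_smul] at hk
      have hw := hweakP t l hl0.le hl1
      have h2 : l * P x ≤ l * (P t + ⟪G, t - x⟫ + ρ / 2 * ‖t - x‖ ^ 2 + l * c) := by
        rw [hcdef]
        nlinarith [hk, hw]
      have h3 := (mul_le_mul_iff_right₀ hl0).mp h2
      linarith [hlc]
    have := hsb t
    linarith
  · -- minimizer → fixed point
    intro hmin
    have hkey : ∀ s : EuclideanSpace ℝ (Fin n),
        P x ≤ P s + ⟪G, s - x⟫ + 1 / (2 * α) * ‖s - x‖ ^ 2 := by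
      intro s
      have hd1 : HasDerivAt (fun l : ℝ => f (x + l • (s - x))) ⟪G, s - x⟫ 0 :=
        aux_hasDerivAt_line (hf' x) (s - x)
      have hstep : P x - P s - ρ / 2 * ‖s - x‖ ^ 2 ≤ ⟪G, s - x⟫ := by
        apply aux_slope_ge hd1
        intro l hl
        have hm := hmin (x + l • (s - x))
        have hw := hweakP s l hl.1.le hl.2
        rw [le_div_iff₀ hl.1]
        have h0 : x + (0:ℝ) • (s - x) = x := by simp
        rw [h0]
        have h9 : 0 ≤ ρ * l ^ 2 * ‖s - x‖ ^ 2 :=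
          mul_nonneg (mul_nonneg hρ (sq_nonneg l)) (sq_nonneg _)
        nlinarith [hm, hw, h9]
      have hle : ρ / 2 * ‖s - x‖ ^ 2 ≤ 1 / (2 * α) * ‖s - x‖ ^ 2 :=
        mul_le_mul_of_nonneg_right hρα (sq_nonneg _)
      linarith
    refine hTuniq z x ?_
    intro s
    rw [halg s, halgx]
    have := hkey s
    linarith
end

section
/- Let S : ℝⁿ → ℝⁿ be the affine map S(x) = Mx + u with M a symmetric n×n real matrix and u a fixed vector. Then S is β-averaged for some β ∈ (0,1) if and only if all eigenvalues of M lie in the interval (−1, 1]. -/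
open Set

lemma key_norm_bound {n : ℕ} {M : Matrix (Fin n) (Fin n) ℝ} (hM : M.IsHermitian) {c r : ℝ}
    (hr : ∀ i, |hM.eigenvalues i - c| ≤ r) (hr0 : 0 ≤ r) (v : EuclideanSpace ℝ (Fin n)) :
    ‖Matrix.toEuclideanLin M v - c • v‖ ≤ r * ‖v‖ := by
  set b := hM.eigenvectorBasis with hb
  have hsym := Matrix.isHermitian_iff_isSymmetric.1 hM
  have hrepr : ∀ i, b.repr (Matrix.toEuclideanLin M v - c • v) i
      = (hM.eigenvalues i - c) * b.repr v i := by
    intro i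
    have hbi : Matrix.toEuclideanLin M (b i) = hM.eigenvalues i • b i := by
      ext j; simp [hb, Matrix.toEuclideanLin_apply, hM.mulVec_eigenvectorBasis]
    rw [map_sub, map_smul]
    simp only [PiLp.sub_apply, PiLp.smul_apply, OrthonormalBasis.repr_apply_apply]
    rw [← hsym (b i) v, hbi, real_inner_smul_left]
    simp only [smul_eq_mul]
    ring
  rw [← b.repr.norm_map (Matrix.toEuclideanLin M v - c • v), ← b.repr.norm_map v,
    EuclideanSpace.norm_eq, EuclideanSpace.norm_eq]
  rw [show r * √(∑ i, ‖b.repr v i‖ ^ 2) = √(r ^ 2 * ∑ i, ‖b.repr v i‖ ^ 2) by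
    rw [Real.sqrt_mul (sq_nonneg r), Real.sqrt_sq hr0]]
  apply Real.sqrt_le_sqrt
  rw [Finset.mul_sum]
  apply Finset.sum_le_sum
  intro i _
  rw [hrepr i]
  rw [Real.norm_eq_abs, Real.norm_eq_abs, abs_mul, mul_pow]
  have h1 := hr i
  have h2 : |hM.eigenvalues i - c| ^ 2 ≤ r ^ 2 := by nlinarith [abs_nonneg (hM.eigenvalues i - c)]
  nlinarith [sq_nonneg (b.repr v i), sq_abs (b.repr v i)]

theorem affine_symmetric_averaged_iff_eigenvalues
    (n : ℕ)
    (M : Matrix (Fin n) (Fin n) ℝ)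
    (hM : M.IsHermitian)
    (u : EuclideanSpace ℝ (Fin n))
    (S : EuclideanSpace ℝ (Fin n) → EuclideanSpace ℝ (Fin n))
    (hS : ∀ x, S x = Matrix.toEuclideanLin M x + u) :
    (∃ β ∈ Ioo (0 : ℝ) 1, ∃ U : EuclideanSpace ℝ (Fin n) → EuclideanSpace ℝ (Fin n),
        LipschitzWith 1 U ∧ ∀ x, S x = (1 - β) • x + β • U x)
      ↔ ∀ i, hM.eigenvalues i ∈ Ioc (-1 : ℝ) 1 := by
  constructor
  · rintro ⟨β, ⟨hβ0, hβ1⟩, U, hU, hSU⟩ i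
    set b := hM.eigenvectorBasis with hbdef
    have hbi : Matrix.toEuclideanLin M (b i) = hM.eigenvalues i • b i := by
      ext j; simp [hbdef, Matrix.toEuclideanLin_apply, hM.mulVec_eigenvectorBasis]
    have hUx : ∀ x, β • U x = Matrix.toEuclideanLin M x + u - (1 - β) • x := by
      intro x
      have := (hSU x).symm.trans (hS x)
      linear_combination (norm := module) this
    have h1 : β • U (b i) = hM.eigenvalues i • b i + u - (1 - β) • b i := by rw [hUx, hbi]
    have h0 : β • U 0 = u := by simpa using hUx 0
    have hdiff : β • (U (b i) - U 0) = (hM.eigenvalues i - (1 - β)) • b i := by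
      rw [smul_sub, h1, h0]; module
    have hnb : ‖b i‖ = 1 := b.orthonormal.1 i
    have hlip : ‖U (b i) - U 0‖ ≤ 1 := by
      have := hU.dist_le_mul (b i) 0
      rw [dist_eq_norm, dist_eq_norm, sub_zero, hnb] at this
      simpa using this
    have habs : |hM.eigenvalues i - (1 - β)| ≤ β := by
      have hc := congrArg norm hdiff
      rw [norm_smul, norm_smul, hnb, mul_one, Real.norm_eq_abs, Real.norm_eq_abs,
        abs_of_pos hβ0] at hc
      nlinarith [norm_nonneg (U (b i) - U 0)]
    rw [abs_le] at habs
    constructor <;> [linarith [habs.1]; linarith [habs.2]]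
  · intro h
    by_cases hn : n = 0
    · subst hn
      haveI : Subsingleton (EuclideanSpace ℝ (Fin 0)) :=
        ⟨fun a b => PiLp.ext fun i => i.elim0⟩
      refine ⟨1/2, ⟨by norm_num, by norm_num⟩, fun x => x, ?_, ?_⟩
      · exact LipschitzWith.id
      · intro x; exact Subsingleton.elim _ _
    · haveI : Nonempty (Fin n) := ⟨⟨0, Nat.pos_of_ne_zero hn⟩⟩
      obtain ⟨i₀, hi₀⟩ := Finite.exists_min hM.eigenvalues
      set m := hM.eigenvalues i₀ with hmdef
      have hm1 : -1 < m := (h i₀).1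
      have hm2 : m ≤ 1 := (h i₀).2
      set β := (3 - m) / 4 with hβdef
      have hβ0 : 0 < β := by rw [hβdef]; linarith
      have hβ1 : β < 1 := by rw [hβdef]; linarith
      refine ⟨β, ⟨hβ0, hβ1⟩, fun x => β⁻¹ • (S x - (1 - β) • x), ?_, ?_⟩
      · apply LipschitzWith.of_dist_le_mul
        intro x y
        have heq : β⁻¹ • (S x - (1 - β) • x) - β⁻¹ • (S y - (1 - β) • y)
            = β⁻¹ • (Matrix.toEuclideanLin M (x - y) - (1 - β) • (x - y)) := by
          rw [hS x, hS y, map_sub]; module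
        rw [dist_eq_norm, dist_eq_norm, heq, norm_smul, Real.norm_eq_abs,
          abs_of_pos (by positivity : (0:ℝ) < β⁻¹)]
        have hr : ∀ i, |hM.eigenvalues i - (1 - β)| ≤ β := by
          intro i
          rw [abs_le]
          constructor
          · have := hi₀ i; rw [hβdef]; rw [hβdef] at *; linarith
          · have := (h i).2; linarith
        have hkey := key_norm_bound hM hr hβ0.le (x - y)
        rw [NNReal.coe_one, one_mul]
        calc β⁻¹ * ‖Matrix.toEuclideanLin M (x - y) - (1 - β) • (x - y)‖
            ≤ β⁻¹ * (β * ‖x - y‖) := by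
              apply mul_le_mul_of_nonneg_left hkey (by positivity)
          _ = ‖x - y‖ := by field_simp
      · intro x
        rw [smul_inv_smul₀ hβ0.ne']
        module
end

section
/- Let H be a linear map with σₘ ≤ HᵀH ≤ σ_M (eigenvalue bounds), 0 ≤ ρ ≤ σₘ, αρ < 1, and 0 < α < 2/(σ_M + ρ). Define V_α(x) = (1/(1−αρ))(αHᵀy + (I − αHᵀH)x). Then V_α is a β-averaged operator for some β ∈ (0,1). -/
open LinearMap

lemma cs_op {E : Type*} [NormedAddCommGroup E] [InnerProductSpace ℝ E]
    (B : E →ₗ[ℝ] E) (hsymm : ∀ u z : E, (inner ℝ (B u) z : ℝ) = (inner ℝ u (B z) : ℝ))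
    (hpos : ∀ u : E, 0 ≤ (inner ℝ (B u) u : ℝ)) (D : ℝ)
    (hbd : ∀ u : E, (inner ℝ (B u) u : ℝ) ≤ D * (inner ℝ u u : ℝ)) (v : E) :
    (inner ℝ (B v) (B v) : ℝ) ≤ D * (inner ℝ (B v) v : ℝ) := by
  set p : ℝ := inner ℝ (B v) v with hp
  set s : ℝ := inner ℝ (B v) (B v) with hs
  set k : ℝ := inner ℝ (B (B v)) (B v) with hk
  have hp0 : 0 ≤ p := hpos v
  have hk0 : 0 ≤ k := hpos (B v)
  have hs0 : 0 ≤ s := by rw [hs]; exact real_inner_self_nonneg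
  have hkD : k ≤ D * s := hbd (B v)
  have hquad : ∀ t : ℝ, 0 ≤ p - 2 * t * s + t ^ 2 * k := by
    intro t
    have h := hpos (v - t • B v)
    have e : (inner ℝ (B (v - t • B v)) (v - t • B v) : ℝ)
        = p - 2 * t * s + t ^ 2 * k := by
      rw [map_sub, map_smul, inner_sub_left, inner_sub_right, inner_sub_right,
        real_inner_smul_left, real_inner_smul_left,
        real_inner_smul_right, real_inner_smul_right]
      have h1 : (inner ℝ (B (B v)) v : ℝ) = s := by rw [hsymm (B v) v, real_inner_comm, hs]
      have h2 : (inner ℝ (B v) (B v) : ℝ) = s := hs.symm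
      rw [h1, h2, ← hp, ← hk]; ring
    rw [e] at h; exact h
  show s ≤ D * p
  rcases eq_or_lt_of_le hk0 with hk0' | hkpos
  · have hs0' : s = 0 := by
      by_contra hs0'
      have hspos : 0 < s := lt_of_le_of_ne hs0 (Ne.symm hs0')
      have h := hquad ((p + 1) / (2 * s))
      rw [← hk0'] at h
      have heq : p - 2 * ((p + 1) / (2 * s)) * s + ((p + 1) / (2 * s)) ^ 2 * 0 = -1 := by
        field_simp
        ring
      rw [heq] at h; linarith
    rw [hs0']
    rcases eq_or_lt_of_le hp0 with hp' | hp'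
    · rw [← hp']; simp
    · have hD : 0 < D := by
        nlinarith [hbd v, (real_inner_self_nonneg : (0:ℝ) ≤ inner ℝ v v)]
      positivity
  · have hcs : s ^ 2 ≤ p * k := by
      have h := hquad (s / k)
      have heq : p - 2 * (s / k) * s + (s / k) ^ 2 * k = p - s ^ 2 / k := by
        field_simp; ring
      rw [heq] at h
      have := (div_le_iff₀ hkpos).mp (by linarith : s ^ 2 / k ≤ p)
      linarith
    by_contra hc
    push_neg at hc
    have hspos : 0 < s := lt_of_le_of_lt (mul_nonneg (by nlinarith [hkD, hp0, hk0] : (0:ℝ) ≤ D) hp0) hc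
    nlinarith [mul_le_mul_of_nonneg_left hkD hp0, mul_lt_mul_of_pos_right hc hspos]

lemma key_ineq {n m : ℕ}
    (H : EuclideanSpace ℝ (Fin n) →ₗ[ℝ] EuclideanSpace ℝ (Fin m))
    (σm σM : ℝ)
    (heig_lo : ∀ x : EuclideanSpace ℝ (Fin n), σm * ‖x‖ ^ 2 ≤ (inner ℝ (H x) (H x) : ℝ))
    (heig_hi : ∀ x : EuclideanSpace ℝ (Fin n), (inner ℝ (H x) (H x) : ℝ) ≤ σM * ‖x‖ ^ 2)
    (v : EuclideanSpace ℝ (Fin n)) :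
    ‖(LinearMap.adjoint H) (H v)‖ ^ 2 ≤
      (σm + σM) * (inner ℝ (H v) (H v) : ℝ) - σm * σM * ‖v‖ ^ 2 := by
  set B : EuclideanSpace ℝ (Fin n) →ₗ[ℝ] EuclideanSpace ℝ (Fin n) :=
    (LinearMap.adjoint H).comp H - σm • LinearMap.id with hB
  have hBapp : ∀ u, B u = (LinearMap.adjoint H) (H u) - σm • u := by
    intro u; simp [hB]
  have hBin : ∀ u z : EuclideanSpace ℝ (Fin n),
      (inner ℝ (B u) z : ℝ) = (inner ℝ (H u) (H z) : ℝ) - σm * (inner ℝ u z : ℝ) := by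
    intro u z
    rw [hBapp, inner_sub_left, real_inner_smul_left, LinearMap.adjoint_inner_left]
  have hsymm : ∀ u z : EuclideanSpace ℝ (Fin n),
      (inner ℝ (B u) z : ℝ) = (inner ℝ u (B z) : ℝ) := by
    intro u z
    rw [hBin u z, real_inner_comm (B z) u, hBin z u, real_inner_comm (H u) (H z),
      real_inner_comm u z]
  have hpos : ∀ u, 0 ≤ (inner ℝ (B u) u : ℝ) := by
    intro u
    have h := heig_lo u
    simp only [hBin, real_inner_self_eq_norm_sq] at h ⊢
    linarith
  have hbd : ∀ u, (inner ℝ (B u) u : ℝ) ≤ (σM - σm) * (inner ℝ u u : ℝ) := by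
    intro u
    have h := heig_hi u
    simp only [hBin, real_inner_self_eq_norm_sq] at h ⊢
    linarith
  have hcs := cs_op B hsymm hpos (σM - σm) hbd v
  have hBv : B v = (LinearMap.adjoint H) (H v) - σm • v := hBapp v
  have e1 : (inner ℝ (B v) (B v) : ℝ)
      = ‖(LinearMap.adjoint H) (H v)‖ ^ 2 - 2 * σm * (inner ℝ (H v) (H v) : ℝ)
        + σm ^ 2 * ‖v‖ ^ 2 := by
    have a1 : (inner ℝ ((LinearMap.adjoint H) (H v)) ((LinearMap.adjoint H) (H v)) : ℝ)
        = ‖(LinearMap.adjoint H) (H v)‖ ^ 2 := real_inner_self_eq_norm_sq _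
    have a2 : (inner ℝ ((LinearMap.adjoint H) (H v)) v : ℝ) = (inner ℝ (H v) (H v) : ℝ) :=
      LinearMap.adjoint_inner_left H v (H v)
    have a3 : (inner ℝ v ((LinearMap.adjoint H) (H v)) : ℝ) = (inner ℝ (H v) (H v) : ℝ) := by
      rw [real_inner_comm]; exact a2
    have a4 : (inner ℝ v v : ℝ) = ‖v‖ ^ 2 := real_inner_self_eq_norm_sq _
    rw [hBv, inner_sub_sub_self]
    simp only [real_inner_smul_left, real_inner_smul_right]
    rw [a1, a2, a3, a4]
    ring
  have e2 : (inner ℝ (B v) v : ℝ) = (inner ℝ (H v) (H v) : ℝ) - σm * ‖v‖ ^ 2 := by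
    rw [hBin]
    congr 1
    rw [real_inner_self_eq_norm_sq]
  rw [e1, e2] at hcs
  nlinarith [hcs]


open Set


lemma aux_sq_le (x y : ℝ) (h1 : -y ≤ x) (h2 : x ≤ y) : x^2 ≤ y^2 := by nlinarith

lemma aux_le_of_sq (x y : ℝ) (hx : 0 ≤ x) (hy : 0 ≤ y) (h : x^2 ≤ y^2) : x ≤ y := by
  nlinarith

lemma aux_main_bound (a b σm σM β2 N q r : ℝ) (hb : 0 ≤ b) (hN : 0 ≤ N)
    (hq1 : σm * N ≤ q) (hq2 : q ≤ σM * N)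
    (hr : r ≤ (σm + σM) * q - σm * σM * N)
    (h1 : (a - b * σm)^2 ≤ β2) (h2 : (a - b * σM)^2 ≤ β2) :
    a^2 * N - 2*a*b*q + b^2 * r ≤ β2 * N := by
  have hb2 : (0:ℝ) ≤ b^2 := sq_nonneg b
  have hr' : b^2 * r ≤ b^2 * ((σm + σM) * q - σm * σM * N) :=
    mul_le_mul_of_nonneg_left hr hb2
  rcases le_or_gt (b^2*(σm+σM) - 2*a*b) 0 with hF | hF
  · have hp : (b^2*(σm+σM) - 2*a*b) * (q - σm*N) ≤ 0 :=
      mul_nonpos_of_nonpos_of_nonneg hF (by linarith)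
    nlinarith [mul_le_mul_of_nonneg_right h1 hN]
  · have hp : 0 ≤ (b^2*(σm+σM) - 2*a*b) * (σM*N - q) :=
      mul_nonneg hF.le (by linarith)
    nlinarith [mul_le_mul_of_nonneg_right h2 hN]

set_option maxHeartbeats 1600000 in
theorem gradient_step_quadratic_averaged
    (n m : ℕ)
    (H : EuclideanSpace ℝ (Fin n) →ₗ[ℝ] EuclideanSpace ℝ (Fin m))
    (y : EuclideanSpace ℝ (Fin m))
    (σm σM ρ α : ℝ)
    (heig_lo : ∀ x : EuclideanSpace ℝ (Fin n), σm * ‖x‖ ^ 2 ≤ (inner ℝ (H x) (H x) : ℝ))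
    (heig_hi : ∀ x : EuclideanSpace ℝ (Fin n), (inner ℝ (H x) (H x) : ℝ) ≤ σM * ‖x‖ ^ 2)
    (hρ0 : 0 ≤ ρ) (hρσ : ρ ≤ σm)
    (hα : 0 < α) (hαρ : α * ρ < 1) (hα2 : α < 2 / (σM + ρ))
    (V : EuclideanSpace ℝ (Fin n) → EuclideanSpace ℝ (Fin n))
    (hV : ∀ x, V x = (1 / (1 - α * ρ)) •
        (α • ((LinearMap.adjoint H) y) + (x - α • (LinearMap.adjoint H) (H x)))) :
    ∃ β ∈ Ioo (0 : ℝ) 1, ∃ U : EuclideanSpace ℝ (Fin n) → EuclideanSpace ℝ (Fin n),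
      LipschitzWith 1 U ∧ ∀ x, V x = (1 - β) • x + β • U x := by
  rcases Nat.eq_zero_or_pos n with hn | hn
  · -- trivial case: the space is a subsingleton
    subst hn
    have hsub : ∀ x z : EuclideanSpace ℝ (Fin 0), x = z := fun x z =>
      by ext i; exact i.elim0
    refine ⟨1/2, by norm_num, V, ?_, ?_⟩
    · refine LipschitzWith.of_dist_le_mul fun x z => ?_
      rw [hsub (V x) (V z), dist_self]
      positivity
    · intro x
      exact hsub _ _
  -- main case
  set c : ℝ := 1 / (1 - α * ρ) with hc
  have hαρ' : 0 < 1 - α * ρ := by linarith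
  have hcpos : 0 < c := by rw [hc]; positivity
  have hc1 : c * (1 - α * ρ) = 1 := by
    rw [hc]; field_simp
  -- a unit vector gives σm ≤ σM and 0 ≤ σM
  obtain ⟨x₀, hx₀⟩ : ∃ x₀ : EuclideanSpace ℝ (Fin n), ‖x₀‖ = 1 := by
    refine ⟨EuclideanSpace.single ⟨0, hn⟩ (1:ℝ), ?_⟩
    rw [EuclideanSpace.norm_single]; norm_num
  have hσM0 : 0 ≤ σM := by
    have h1 := heig_hi x₀
    have h2 : (0:ℝ) ≤ inner ℝ (H x₀) (H x₀) := real_inner_self_nonneg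
    rw [hx₀] at h1; nlinarith
  have hmM : σm ≤ σM := by
    have h1 := heig_lo x₀
    have h2 := heig_hi x₀
    rw [hx₀] at h1 h2; nlinarith
  have hρσM : ρ ≤ σM := le_trans hρσ hmM
  have hMρpos : 0 < σM + ρ := by
    rcases lt_or_eq_of_le (by linarith : (0:ℝ) ≤ σM + ρ) with h | h
    · exact h
    · rw [← h, div_zero] at hα2; linarith
  have hα2' : α * (σM + ρ) < 2 := by
    have := (lt_div_iff₀ hMρpos).mp hα2
    linarith
  set t1 : ℝ := c * (1 - α * σm) with ht1
  set t2 : ℝ := c * (1 - α * σM) with ht2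
  have ht2lo : -1 < t2 := by
    have : c * (2 - α * (σM + ρ)) > 0 := by
      apply mul_pos hcpos; linarith
    nlinarith [hc1]
  have ht1hi : t1 ≤ 1 := by
    have : c * (1 - α * σm) ≤ c * (1 - α * ρ) := by
      apply mul_le_mul_of_nonneg_left _ hcpos.le
      nlinarith
    rw [ht1]; linarith [hc1]
  have ht21 : t2 ≤ t1 := by
    rw [ht1, ht2]
    apply mul_le_mul_of_nonneg_left _ hcpos.le
    nlinarith
  set β : ℝ := max ((1 - t2)/2) (1/2) with hβ
  have hβhalf : (1:ℝ)/2 ≤ β := le_max_right _ _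
  have hβt2 : (1 - t2)/2 ≤ β := le_max_left _ _
  have hβ0 : 0 < β := by linarith
  have hβ1 : β < 1 := by
    rw [hβ]
    apply max_lt _ (by norm_num)
    linarith
  set a : ℝ := c - 1 + β with ha
  set b : ℝ := c * α with hb
  have hb0 : 0 ≤ b := by positivity
  have haM : a - b * σM = β - 1 + t2 := by rw [ha, hb, ht2]; ring
  have ham : a - b * σm = β - 1 + t1 := by rw [ha, hb, ht1]; ring
  have hendM : (a - b * σM)^2 ≤ β^2 := by
    rw [haM]
    exact aux_sq_le _ _ (by linarith) (by linarith)
  have hendm : (a - b * σm)^2 ≤ β^2 := by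
    rw [ham]
    exact aux_sq_le _ _ (by linarith) (by linarith)
  -- the candidate U
  refine ⟨β, ⟨hβ0, hβ1⟩, fun x => β⁻¹ • (V x - (1 - β) • x), ?_, ?_⟩
  · -- Lipschitz
    refine LipschitzWith.of_dist_le_mul fun x z => ?_
    rw [dist_eq_norm, dist_eq_norm]
    set w : EuclideanSpace ℝ (Fin n) := x - z with hw
    have hdiff : β⁻¹ • (V x - (1 - β) • x) - β⁻¹ • (V z - (1 - β) • z)
        = β⁻¹ • (a • w - b • ((LinearMap.adjoint H) (H w))) := by
      rw [hV x, hV z, hw, ha, hb]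
      simp only [map_sub]
      module
    rw [hdiff]
    have hkey := key_ineq H σm σM heig_lo heig_hi w
    set Aw : EuclideanSpace ℝ (Fin n) := (LinearMap.adjoint H) (H w) with hAw
    set q : ℝ := inner ℝ (H w) (H w) with hq
    have hq1 : σm * ‖w‖^2 ≤ q := heig_lo w
    have hq2 : q ≤ σM * ‖w‖^2 := heig_hi w
    have hnorm2 : ‖a • w - b • Aw‖^2
        = a^2 * ‖w‖^2 - 2*a*b*q + b^2 * ‖Aw‖^2 := by
      rw [← real_inner_self_eq_norm_sq, inner_sub_sub_self]
      simp only [real_inner_smul_left, real_inner_smul_right]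
      have i1 : (inner ℝ w w : ℝ) = ‖w‖^2 := real_inner_self_eq_norm_sq _
      have i2 : (inner ℝ Aw Aw : ℝ) = ‖Aw‖^2 := real_inner_self_eq_norm_sq _
      have i3 : (inner ℝ Aw w : ℝ) = q := by
        rw [hAw, LinearMap.adjoint_inner_left, hq]
      have i4 : (inner ℝ w Aw : ℝ) = q := by rw [real_inner_comm]; exact i3
      rw [i1, i2, i3, i4]; ring
    have hsq : ‖a • w - b • Aw‖^2 ≤ (β * ‖w‖)^2 := by
      rw [hnorm2]
      have hmb := aux_main_bound a b σm σM (β^2) (‖w‖^2) q (‖Aw‖^2)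
        hb0 (by positivity) hq1 hq2 (by rw [hAw, hq]; exact hkey) hendm hendM
      calc a^2 * ‖w‖^2 - 2*a*b*q + b^2 * ‖Aw‖^2 ≤ β^2 * ‖w‖^2 := hmb
        _ = (β * ‖w‖)^2 := by ring
    have hle : ‖a • w - b • Aw‖ ≤ β * ‖w‖ :=
      aux_le_of_sq _ _ (norm_nonneg _) (by positivity) hsq
    rw [norm_smul]
    simp only [norm_inv, Real.norm_eq_abs, abs_of_pos hβ0]
    push_cast
    rw [one_mul]
    calc β⁻¹ * ‖a • w - b • Aw‖ ≤ β⁻¹ * (β * ‖w‖) := by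
          apply mul_le_mul_of_nonneg_left hle (by positivity)
      _ = ‖w‖ := by field_simp
  · intro x
    rw [smul_smul, mul_inv_cancel₀ (ne_of_gt hβ0), one_smul]
    module
end

section
/- If S₁, S₂ : ℝⁿ → ℝⁿ are β₁- and β₂-averaged operators respectively (β₁, β₂ ∈ (0,1)), then the composition S₁ ∘ S₂ is β-averaged for some β ∈ (0,1). -/
open Set

lemma convex_comb_lipschitz {E : Type*} [NormedAddCommGroup E] [NormedSpace ℝ E]
    (f g : E → E) (hf : LipschitzWith 1 f) (hg : LipschitzWith 1 g)
    (a b : ℝ) (ha : 0 ≤ a) (hb : 0 ≤ b) (hab : a + b = 1) :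
    LipschitzWith 1 (fun x => a • f x + b • g x) := by
  apply LipschitzWith.of_dist_le_mul
  intro x y
  simp only [dist_eq_norm, NNReal.coe_one, one_mul]
  have h1 : ‖f x - f y‖ ≤ ‖x - y‖ := by
    have := hf.dist_le_mul x y
    simpa [dist_eq_norm] using this
  have h2 : ‖g x - g y‖ ≤ ‖x - y‖ := by
    have := hg.dist_le_mul x y
    simpa [dist_eq_norm] using this
  have key : a • f x + b • g x - (a • f y + b • g y)
      = a • (f x - f y) + b • (g x - g y) := by module
  rw [key]
  calc ‖a • (f x - f y) + b • (g x - g y)‖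
      ≤ ‖a • (f x - f y)‖ + ‖b • (g x - g y)‖ := norm_add_le _ _
    _ = a * ‖f x - f y‖ + b * ‖g x - g y‖ := by
        rw [norm_smul, norm_smul, Real.norm_of_nonneg ha, Real.norm_of_nonneg hb]
    _ ≤ a * ‖x - y‖ + b * ‖x - y‖ := by
        gcongr
    _ = ‖x - y‖ := by rw [← add_mul, hab, one_mul]

theorem composition_of_averaged_is_averaged
    (n : ℕ)
    (S₁ S₂ : EuclideanSpace ℝ (Fin n) → EuclideanSpace ℝ (Fin n))
    (β₁ β₂ : ℝ) (hβ₁ : β₁ ∈ Ioo (0 : ℝ) 1) (hβ₂ : β₂ ∈ Ioo (0 : ℝ) 1)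
    (U₁ U₂ : EuclideanSpace ℝ (Fin n) → EuclideanSpace ℝ (Fin n))
    (hU₁ : LipschitzWith 1 U₁) (hU₂ : LipschitzWith 1 U₂)
    (hS₁ : ∀ x, S₁ x = (1 - β₁) • x + β₁ • U₁ x)
    (hS₂ : ∀ x, S₂ x = (1 - β₂) • x + β₂ • U₂ x) :
    ∃ β ∈ Ioo (0 : ℝ) 1, ∃ U : EuclideanSpace ℝ (Fin n) → EuclideanSpace ℝ (Fin n),
      LipschitzWith 1 U ∧ ∀ x, (S₁ ∘ S₂) x = (1 - β) • x + β • U x := by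
  obtain ⟨hβ₁0, hβ₁1⟩ := hβ₁
  obtain ⟨hβ₂0, hβ₂1⟩ := hβ₂
  set β : ℝ := β₁ + β₂ - β₁ * β₂ with hβdef
  have hβpos : 0 < β := by nlinarith
  have hβlt : β < 1 := by nlinarith
  have hβne : β ≠ 0 := ne_of_gt hβpos
  set a : ℝ := (1 - β₁) * β₂ / β with hadef
  set b : ℝ := β₁ / β with hbdef
  have ha : 0 ≤ a := by
    apply div_nonneg _ hβpos.le; nlinarith
  have hb : 0 ≤ b := div_nonneg hβ₁0.le hβpos.le
  have hab : a + b = 1 := by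
    rw [hadef, hbdef, ← add_div, div_eq_one_iff_eq hβne, hβdef]; ring
  have hS₂lip : LipschitzWith 1 S₂ := by
    have := convex_comb_lipschitz (E := EuclideanSpace ℝ (Fin n)) id U₂
      LipschitzWith.id hU₂ (1 - β₂) β₂ (by linarith) hβ₂0.le (by ring)
    have heq : S₂ = fun x => (1 - β₂) • (id x) + β₂ • U₂ x := by
      funext x; simp [hS₂ x]
    rw [heq]; exact this
  refine ⟨β, ⟨hβpos, hβlt⟩, fun x => a • U₂ x + b • U₁ (S₂ x), ?_, ?_⟩
  · exact convex_comb_lipschitz U₂ (U₁ ∘ S₂) hU₂ (by simpa using hU₁.comp hS₂lip) a b ha hb hab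
  · intro x
    simp only [Function.comp_apply]
    rw [hS₁ (S₂ x)]
    nth_rewrite 1 [hS₂ x]
    have hba : β * a = (1 - β₁) * β₂ := by rw [hadef]; field_simp
    have hbb : β * b = β₁ := by rw [hbdef]; field_simp
    simp only [smul_add, smul_smul]
    rw [hba, hbb, hβdef]
    module
end

section
/- (Krasnosels'kiĭ–Mann in ℝⁿ) Let S : ℝⁿ → ℝⁿ be β-averaged for some β ∈ (0,1) and suppose its fixed point set is non-empty. Then for any x⁰, the sequence defined by xⁿ⁺¹ = S(xⁿ) converges, and its limit is a fixed point of S. -/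
open Set Filter

section Aux

variable {E : Type*} [NormedAddCommGroup E] [InnerProductSpace ℝ E]

lemma avg_norm_sq (β : ℝ) (u v : E) :
    ‖(1 - β) • u + β • v‖ ^ 2
      = (1 - β) * ‖u‖ ^ 2 + β * ‖v‖ ^ 2 - β * (1 - β) * ‖u - v‖ ^ 2 := by
  have h1 := norm_add_sq_real ((1 - β) • u) (β • v)
  have h2 := norm_sub_sq_real u v
  have hip : inner ℝ ((1 - β) • u) (β • v) = (1 - β) * β * inner ℝ u v := by
    rw [real_inner_smul_left, real_inner_smul_right]; ring
  have hnu : ‖(1 - β) • u‖ ^ 2 = (1 - β) ^ 2 * ‖u‖ ^ 2 := by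
    rw [norm_smul]; rw [Real.norm_eq_abs, mul_pow, sq_abs]
  have hnv : ‖β • v‖ ^ 2 = β ^ 2 * ‖v‖ ^ 2 := by
    rw [norm_smul]; rw [Real.norm_eq_abs, mul_pow, sq_abs]
  rw [h1, hip, hnu, hnv]
  nlinarith [h2]

/-- antitone nonneg real sequence with a subsequence tending to 0 tends to 0 -/
lemma antitone_tendsto_zero {a : ℕ → ℝ} (ha : Antitone a) (h0 : ∀ k, 0 ≤ a k)
    {φ : ℕ → ℕ} (hφ : StrictMono φ) (hsub : Tendsto (a ∘ φ) atTop (nhds 0)) :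
    Tendsto a atTop (nhds 0) := by
  have hbdd : BddBelow (range a) := ⟨0, by rintro _ ⟨k, rfl⟩; exact h0 k⟩
  have hmain := tendsto_atTop_ciInf ha hbdd
  have hsub' : Tendsto (a ∘ φ) atTop (nhds (⨅ i, a i)) :=
    hmain.comp hφ.tendsto_atTop
  have : (⨅ i, a i) = 0 := tendsto_nhds_unique hsub' hsub
  rwa [this] at hmain

end Aux

theorem krasnoselskii_mann_finite_dim
    (n : ℕ)
    (S : EuclideanSpace ℝ (Fin n) → EuclideanSpace ℝ (Fin n))
    (β : ℝ) (hβ : β ∈ Ioo (0 : ℝ) 1)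
    (U : EuclideanSpace ℝ (Fin n) → EuclideanSpace ℝ (Fin n))
    (hU : LipschitzWith 1 U)
    (hS : ∀ x, S x = (1 - β) • x + β • U x)
    (hfix : ∃ z, S z = z)
    (x : ℕ → EuclideanSpace ℝ (Fin n))
    (hrec : ∀ k, x (k + 1) = S (x k)) :
    ∃ L, Tendsto x atTop (nhds L) ∧ S L = L := by
  obtain ⟨hβ0, hβ1⟩ := hβ
  obtain ⟨z, hz⟩ := hfix
  -- U z = z
  have hUz : U z = z := by
    have h := hS z
    rw [hz] at h
    have : β • (U z - z) = 0 := by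
      rw [smul_sub]
      have : z = (1 - β) • z + β • U z := h
      have hzsum : (1 - β) • z + β • z = z := by
        rw [← add_smul]; simp
      linear_combination (norm := module) -h + hzsum
    have := smul_eq_zero.mp this
    rcases this with h' | h'
    · exact absurd h' (ne_of_gt hβ0)
    · have := sub_eq_zero.mp h'
      exact this
  -- nonexpansiveness of U in norm form
  have hUne : ∀ a b, ‖U a - U b‖ ≤ ‖a - b‖ := by
    intro a b
    have := hU.dist_le_mul a b
    simpa [dist_eq_norm] using this
  -- key identity / decrease
  have hkey : ∀ k, ‖x (k+1) - z‖ ^ 2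
      ≤ ‖x k - z‖ ^ 2 - β * (1 - β) * ‖x k - U (x k)‖ ^ 2 := by
    intro k
    have hx : x (k+1) - z = (1 - β) • (x k - z) + β • (U (x k) - z) := by
      rw [hrec, hS]
      have : z = (1 - β) • z + β • z := by rw [← add_smul]; simp
      rw [smul_sub, smul_sub]
      module
    rw [hx, avg_norm_sq]
    have hle : ‖U (x k) - z‖ ≤ ‖x k - z‖ := by
      have := hUne (x k) z
      rwa [hUz] at this
    have hdiff : (x k - z) - (U (x k) - z) = x k - U (x k) := by abel
    rw [hdiff]
    have hle2 : ‖U (x k) - z‖ ^ 2 ≤ ‖x k - z‖ ^ 2 :=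
      pow_le_pow_left₀ (norm_nonneg _) hle 2
    nlinarith [hle2]
  -- ‖x k - z‖^2 is antitone
  have hmono : Antitone (fun k => ‖x k - z‖ ^ 2) := by
    apply antitone_nat_of_succ_le
    intro k
    have := hkey k
    nlinarith [norm_nonneg (x k - U (x k)), mul_pos hβ0 (sub_pos.mpr hβ1),
      sq_nonneg (‖x k - U (x k)‖)]
  have hnn : ∀ k, (0:ℝ) ≤ ‖x k - z‖ ^ 2 := fun k => sq_nonneg _
  -- a converges to its inf
  have hbdd : BddBelow (range fun k => ‖x k - z‖ ^ 2) :=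
    ⟨0, by rintro _ ⟨k, rfl⟩; exact hnn k⟩
  have haconv := tendsto_atTop_ciInf hmono hbdd
  set m := ⨅ k, ‖x k - z‖ ^ 2 with hm
  have hshift : Tendsto (fun k => ‖x (k+1) - z‖ ^ 2) atTop (nhds m) :=
    haconv.comp (tendsto_add_atTop_nat 1)
  have hdiff0 : Tendsto (fun k => ‖x k - z‖ ^ 2 - ‖x (k+1) - z‖ ^ 2) atTop (nhds 0) := by
    have := haconv.sub hshift
    simpa using this
  -- ‖x k - U (x k)‖^2 → 0 by squeeze
  have hsq0 : Tendsto (fun k => ‖x k - U (x k)‖ ^ 2) atTop (nhds 0) := by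
    have c := mul_pos hβ0 (sub_pos.mpr hβ1)
    have hupper : ∀ k, ‖x k - U (x k)‖ ^ 2
        ≤ (β * (1 - β))⁻¹ * (‖x k - z‖ ^ 2 - ‖x (k+1) - z‖ ^ 2) := by
      intro k
      have := hkey k
      have h2 : β * (1 - β) * ‖x k - U (x k)‖ ^ 2 ≤ ‖x k - z‖ ^ 2 - ‖x (k+1) - z‖ ^ 2 := by
        linarith
      calc ‖x k - U (x k)‖ ^ 2
          = (β * (1 - β))⁻¹ * (β * (1 - β) * ‖x k - U (x k)‖ ^ 2) := by
            field_simp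
        _ ≤ (β * (1 - β))⁻¹ * (‖x k - z‖ ^ 2 - ‖x (k+1) - z‖ ^ 2) := by
            apply mul_le_mul_of_nonneg_left h2 (le_of_lt (inv_pos.mpr c))
    have htend : Tendsto (fun k => (β * (1 - β))⁻¹ * (‖x k - z‖ ^ 2 - ‖x (k+1) - z‖ ^ 2))
        atTop (nhds 0) := by
      have := hdiff0.const_mul ((β * (1 - β))⁻¹)
      simpa using this
    exact squeeze_zero (fun k => sq_nonneg _) hupper htend
  have hd0 : Tendsto (fun k => ‖x k - U (x k)‖) atTop (nhds 0) := by
    have h := (Real.continuous_sqrt.tendsto 0).comp hsq0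
    simp only [Real.sqrt_zero] at h
    exact Filter.Tendsto.congr
      (fun k => by simp [Function.comp, Real.sqrt_sq (norm_nonneg _)]) h
  -- boundedness: x k ∈ closedBall z ‖x 0 - z‖
  have hbound : ∀ k, x k ∈ Metric.closedBall z ‖x 0 - z‖ := by
    intro k
    rw [Metric.mem_closedBall, dist_eq_norm]
    have h2 : ‖x k - z‖ ^ 2 ≤ ‖x 0 - z‖ ^ 2 := hmono (Nat.zero_le k)
    have := Real.sqrt_le_sqrt h2
    rwa [Real.sqrt_sq (norm_nonneg _), Real.sqrt_sq (norm_nonneg _)] at this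
  obtain ⟨L, _, φ, hφ, hLtend⟩ :=
    (isCompact_closedBall z ‖x 0 - z‖).tendsto_subseq hbound
  -- U L = L
  have hUL : U L = L := by
    have hUcont : Tendsto (fun j => U (x (φ j))) atTop (nhds (U L)) :=
      (hU.continuous.tendsto L).comp hLtend
    have hdsub : Tendsto (fun j => x (φ j) - U (x (φ j))) atTop (nhds 0) := by
      have : Tendsto (fun j => ‖x (φ j) - U (x (φ j))‖) atTop (nhds 0) :=
        hd0.comp hφ.tendsto_atTop
      exact tendsto_zero_iff_norm_tendsto_zero.mpr this
    have : Tendsto (fun j => x (φ j) - U (x (φ j))) atTop (nhds (L - U L)) :=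
      hLtend.sub hUcont
    have hLU : L - U L = 0 := tendsto_nhds_unique this hdsub
    have := sub_eq_zero.mp hLU
    exact this.symm
  have hSL : S L = L := by
    rw [hS, hUL, ← add_smul]; simp
  -- Fejér monotonicity wrt L
  refine ⟨L, ?_, hSL⟩
  have hmonoL : Antitone (fun k => ‖x k - L‖) := by
    apply antitone_nat_of_succ_le
    intro k
    have hx : x (k+1) - L = (1 - β) • (x k - L) + β • (U (x k) - L) := by
      rw [hrec, hS]
      have : L = (1 - β) • L + β • L := by rw [← add_smul]; simp
      rw [smul_sub, smul_sub]
      linear_combination (norm := module) this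
    rw [hx]
    calc ‖(1 - β) • (x k - L) + β • (U (x k) - L)‖
        ≤ ‖(1 - β) • (x k - L)‖ + ‖β • (U (x k) - L)‖ := norm_add_le _ _
      _ = (1 - β) * ‖x k - L‖ + β * ‖U (x k) - L‖ := by
          rw [norm_smul, norm_smul, Real.norm_eq_abs, Real.norm_eq_abs,
            abs_of_pos hβ0, abs_of_pos (sub_pos.mpr hβ1)]
      _ ≤ (1 - β) * ‖x k - L‖ + β * ‖x k - L‖ := by
          have := hUne (x k) L
          rw [hUL] at this
          nlinarith
      _ = ‖x k - L‖ := by ring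
  have hsubL : Tendsto (fun j => ‖x (φ j) - L‖) atTop (nhds 0) := by
    have : Tendsto (fun j => x (φ j) - L) atTop (nhds (L - L)) := hLtend.sub tendsto_const_nhds
    rw [sub_self] at this
    exact (tendsto_zero_iff_norm_tendsto_zero.mp this)
  have := antitone_tendsto_zero hmonoL (fun k => norm_nonneg _) hφ hsubL
  exact tendsto_iff_norm_sub_tendsto_zero.mpr this
end

section
/- Suppose f : ℝⁿ → ℝ is ρ-strongly convex, differentiable, with σ-Lipschitz gradient, σ > ρ ≥ 0. If 0 < α < 2/(σ + ρ) (so αρ < 1), then the operator V_α = (1/(1−αρ))(I − α∇f) is β-averaged with β = α(σ + ρ)/2 ∈ (0,1). -/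
open Set
open scoped RealInnerProductSpace

section aux
variable {E : Type*} [NormedAddCommGroup E] [InnerProductSpace ℝ E] [CompleteSpace E]

lemma grad_combo {q : E → ℝ} {q' x : E} (hq : HasGradientAt q q' x) (c b : ℝ) :
    HasGradientAt (fun y => c * ‖y‖ ^ 2 + b * q y) ((2 * c) • x + b • q') x := by
  have h1 : HasFDerivAt (fun y : E => ⟪y, y⟫)
      ((fderivInnerCLM ℝ (x, x)).comp ((ContinuousLinearMap.id ℝ E).prod
        (ContinuousLinearMap.id ℝ E))) x :=
    (hasFDerivAt_id x).inner ℝ (hasFDerivAt_id x)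
  have h2 := (h1.const_smul c).add ((hq.hasFDerivAt).const_smul b)
  rw [HasGradientAt, HasGradientAtFilter]
  have heq : (fun y : E => c * ‖y‖ ^ 2 + b * q y) = (fun y : E => c • ⟪y, y⟫ + b • q y) := by
    funext y
    rw [real_inner_self_eq_norm_sq]
    simp [smul_eq_mul]
  rw [heq]
  have hCLM : (InnerProductSpace.toDual ℝ E) ((2 * c) • x + b • q') =
      c • (fderivInnerCLM ℝ (x, x)).comp ((ContinuousLinearMap.id ℝ E).prod
        (ContinuousLinearMap.id ℝ E)) + b • (InnerProductSpace.toDual ℝ E) q' := by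
    ext v
    simp [fderivInnerCLM_apply, InnerProductSpace.toDual_apply_apply, inner_add_left,
      real_inner_smul_left, real_inner_comm]
    ring
  rw [hCLM]
  exact h2

lemma line_deriv {g : E → ℝ} {g' : E → E} (hg : ∀ x, HasGradientAt g (g' x) x)
    (x y : E) (t : ℝ) :
    HasDerivAt (fun s : ℝ => g (s • (y - x) + x)) ⟪g' (t • (y - x) + x), y - x⟫ t := by
  have hline : HasDerivAt (fun s : ℝ => s • (y - x) + x) (y - x) t := by
    have h := (hasDerivAt_id t).smul_const (y - x)
    simpa using h.add_const x
  have h := (hg (t • (y - x) + x)).hasFDerivAt.comp_hasDerivAt t hline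
  simpa [InnerProductSpace.toDual_apply_apply, Function.comp_def] using h

lemma tangent_line {g : E → ℝ} {g' : E → E} (hg : ∀ x, HasGradientAt g (g' x) x)
    (hc : ConvexOn ℝ univ g) (x y : E) : g x + ⟪g' x, y - x⟫ ≤ g y := by
  set φ : ℝ → ℝ := fun t => g (t • (y - x) + x) with hφ
  have hconv : ConvexOn ℝ univ φ := by
    refine ⟨convex_univ, ?_⟩
    intro p _ q _ u v hu hv huv
    have key : u • (p • (y - x) + x) + v • (q • (y - x) + x)
        = (u * p + v * q) • (y - x) + (u + v) • x := by module
    rw [huv, one_smul] at key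
    have := hc.2 (mem_univ (p • (y - x) + x)) (mem_univ (q • (y - x) + x)) hu hv huv
    simpa [hφ, smul_eq_mul, ← key] using this
  have h01 := hconv.le_slope_of_hasDerivAt (mem_univ (0 : ℝ)) (mem_univ (1 : ℝ)) one_pos
    (line_deriv hg x y 0)
  rw [slope_def_field] at h01
  simp only [hφ, zero_smul, zero_add, one_smul, sub_add_cancel, sub_zero, div_one] at h01
  linarith

lemma convexOn_of_monotone_grad {q : E → ℝ} {q' : E → E}
    (hq : ∀ x, HasGradientAt q (q' x) x)
    (hm : ∀ u v, 0 ≤ ⟪q' u - q' v, u - v⟫) : ConvexOn ℝ univ q := by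
  refine ⟨convex_univ, ?_⟩
  intro x _ y _ u v hu hv huv
  set φ : ℝ → ℝ := fun t => q (t • (y - x) + x) with hφ
  have hd : ∀ t : ℝ, HasDerivAt φ ⟪q' (t • (y - x) + x), y - x⟫ t := line_deriv hq x y
  have hdiff : Differentiable ℝ φ := fun t => (hd t).differentiableAt
  have hmono : Monotone (deriv φ) := by
    intro s t hst
    rw [(hd s).deriv, (hd t).deriv]
    have h := hm (t • (y - x) + x) (s • (y - x) + x)
    have harg : (t • (y - x) + x) - (s • (y - x) + x) = (t - s) • (y - x) := by module
    rw [harg] at h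
    rw [real_inner_smul_right, inner_sub_left] at h
    rcases hst.eq_or_lt with rfl | hlt
    · exact le_refl _
    · nlinarith [sub_pos.2 hlt]
  have hconv : ConvexOn ℝ univ φ := hmono.convexOn_univ_of_deriv hdiff
  have key : u • x + v • y = (u * 0 + v * 1) • (y - x) + (u + v) • x := by module
  rw [huv, one_smul] at key
  have := hconv.2 (mem_univ (0 : ℝ)) (mem_univ (1 : ℝ)) hu hv huv
  simp only [smul_eq_mul, hφ] at this
  simpa [hφ, key, zero_smul, zero_add, one_smul, sub_add_cancel] using this

lemma coco {f : E → ℝ} {f' : E → E} (hf' : ∀ x, HasGradientAt f (f' x) x)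
    {ρ σ : ℝ} (hρ : 0 ≤ ρ) (hσρ : ρ < σ)
    (hstrong : ConvexOn ℝ univ (fun x => f x - ρ / 2 * ‖x‖ ^ 2))
    (hlip : ∀ x y, ‖f' x - f' y‖ ≤ σ * ‖x - y‖) (x y : E) :
    ρ * ‖x - y‖ ^ 2 ≤ ⟪f' x - f' y, x - y⟫ ∧
    ‖f' x - f' y‖ ^ 2 + ρ * σ * ‖x - y‖ ^ 2 ≤ (σ + ρ) * ⟪f' x - f' y, x - y⟫ := by
  -- gradient of h = f - ρ/2‖·‖²
  have hh' : ∀ z : E, HasGradientAt (fun w => f w - ρ / 2 * ‖w‖ ^ 2) (f' z - ρ • z) z := by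
    intro z
    have h0 := grad_combo (hf' z) (-(ρ / 2)) 1
    have hfun : (fun w : E => -(ρ / 2) * ‖w‖ ^ 2 + 1 * f w)
        = fun w => f w - ρ / 2 * ‖w‖ ^ 2 := by funext w; ring
    have hvec : (2 * -(ρ / 2)) • z + (1 : ℝ) • f' z = f' z - ρ • z := by module
    rw [hfun, hvec] at h0
    exact h0
  -- gradient of p = σ/2‖·‖² - f
  have hp' : ∀ z : E, HasGradientAt (fun w => σ / 2 * ‖w‖ ^ 2 - f w) (σ • z - f' z) z := by
    intro z
    have h0 := grad_combo (hf' z) (σ / 2) (-1)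
    have hfun : (fun w : E => σ / 2 * ‖w‖ ^ 2 + (-1) * f w)
        = fun w => σ / 2 * ‖w‖ ^ 2 - f w := by funext w; ring
    have hvec : (2 * (σ / 2)) • z + (-1 : ℝ) • f' z = σ • z - f' z := by module
    rw [hfun, hvec] at h0
    exact h0
  -- p is convex (monotone gradient via Cauchy-Schwarz + Lipschitz)
  have hpconv : ConvexOn ℝ univ (fun w : E => σ / 2 * ‖w‖ ^ 2 - f w) := by
    apply convexOn_of_monotone_grad hp'
    intro u v
    have e1 : (σ • u - f' u) - (σ • v - f' v) = σ • (u - v) - (f' u - f' v) := by module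
    rw [e1, inner_sub_left, real_inner_smul_left, real_inner_self_eq_norm_sq]
    have hcs : ⟪f' u - f' v, u - v⟫ ≤ ‖f' u - f' v‖ * ‖u - v‖ := real_inner_le_norm _ _
    have hl := hlip u v
    nlinarith [norm_nonneg (u - v), norm_nonneg (f' u - f' v)]
  -- descent lemma for f
  have hdescf : ∀ a b : E, f b ≤ f a + ⟪f' a, b - a⟫ + σ / 2 * ‖b - a‖ ^ 2 := by
    intro a b
    have ht := tangent_line hp' hpconv a b
    beta_reduce at ht
    have e1 : ⟪σ • a - f' a, b - a⟫ = σ * ⟪a, b - a⟫ - ⟪f' a, b - a⟫ := by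
      rw [inner_sub_left, real_inner_smul_left]
    have e2 : ‖b - a‖ ^ 2 = ‖b‖ ^ 2 - 2 * ⟪a, b - a⟫ - ‖a‖ ^ 2 := by
      rw [norm_sub_sq_real, inner_sub_right, real_inner_self_eq_norm_sq, real_inner_comm]
      ring
    rw [e1] at ht
    nlinarith [ht]
  set L := σ - ρ with hL
  have hLpos : 0 < L := by rw [hL]; linarith
  set c := L⁻¹ with hc
  have hcL : c * L = 1 := inv_mul_cancel₀ hLpos.ne'
  have hcpos : 0 < c := inv_pos.2 hLpos
  -- Baillon–Haddad type inequality
  have BH : ∀ a b : E, (f a - ρ / 2 * ‖a‖ ^ 2) + ⟪f' a - ρ • a, b - a⟫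
      + (c / 2) * ‖(f' a - f' b) - ρ • (a - b)‖ ^ 2 ≤ f b - ρ / 2 * ‖b‖ ^ 2 := by
    intro a b
    set u := (f' a - f' b) - ρ • (a - b) with hu
    set w := b + c • u with hw
    have t1 := tangent_line hh' hstrong a w
    beta_reduce at t1
    have t2 := hdescf b w
    have hwb : w - b = c • u := by rw [hw]; module
    have e1 : ⟪f' a - ρ • a, w - a⟫
        = ⟪f' a - ρ • a, b - a⟫ + c * ⟪f' a - ρ • a, u⟫ := by
      have hwa : w - a = (b - a) + c • u := by rw [hw]; module
      rw [hwa, inner_add_right, real_inner_smul_right]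
    have e2 : ‖w‖ ^ 2 = ‖b‖ ^ 2 + 2 * c * ⟪b, u⟫ + c ^ 2 * ‖u‖ ^ 2 := by
      rw [hw, norm_add_sq_real, real_inner_smul_right, norm_smul]
      simp [mul_pow, sq_abs]
      ring
    have e3 : ⟪f' b, w - b⟫ = c * ⟪f' b, u⟫ := by
      rw [hwb, real_inner_smul_right]
    have e4 : ‖w - b‖ ^ 2 = c ^ 2 * ‖u‖ ^ 2 := by
      rw [hwb, norm_smul]
      simp [mul_pow, sq_abs]
    have e5 : ⟪f' a - ρ • a, u⟫ = ‖u‖ ^ 2 + ⟪f' b, u⟫ - ρ * ⟪b, u⟫ := by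
      have hfa : f' a - ρ • a = u + (f' b - ρ • b) := by rw [hu]; module
      rw [hfa, inner_add_left, real_inner_self_eq_norm_sq, inner_sub_left, real_inner_smul_left]
      ring
    have hLc : L * (c ^ 2 * ‖u‖ ^ 2) = c * ‖u‖ ^ 2 := by
      have : L * c ^ 2 = c := by
        rw [hc]; field_simp
      rw [← mul_assoc, this]
    have hsg : σ * (c ^ 2 * ‖u‖ ^ 2) = L * (c ^ 2 * ‖u‖ ^ 2) + ρ * (c ^ 2 * ‖u‖ ^ 2) := by
      rw [hL]; ring
    rw [e1, e5, e2] at t1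
    rw [e3, e4] at t2
    linarith
  have BHxy := BH x y
  have BHyx := BH y x
  set m := (f' x - f' y) - ρ • (x - y) with hm
  have hmrev : (f' y - f' x) - ρ • (y - x) = -m := by rw [hm]; module
  rw [hmrev, norm_neg] at BHyx
  have hsum : c * ‖m‖ ^ 2 ≤ ⟪m, x - y⟫ := by
    have e6 : ⟪f' x - ρ • x, y - x⟫ = -⟪f' x - ρ • x, x - y⟫ := by
      have : y - x = -(x - y) := by module
      rw [this, inner_neg_right]
    have e7 : ⟪f' x - ρ • x, x - y⟫ - ⟪f' y - ρ • y, x - y⟫ = ⟪m, x - y⟫ := by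
      rw [← inner_sub_left]
      congr 1
      rw [hm]; module
    rw [e6] at BHxy
    linarith
  have eI : ⟪m, x - y⟫ = ⟪f' x - f' y, x - y⟫ - ρ * ‖x - y‖ ^ 2 := by
    rw [hm, inner_sub_left, real_inner_smul_left, real_inner_self_eq_norm_sq]
  have eN : ‖m‖ ^ 2 = ‖f' x - f' y‖ ^ 2 - 2 * ρ * ⟪f' x - f' y, x - y⟫
      + ρ ^ 2 * ‖x - y‖ ^ 2 := by
    rw [hm, norm_sub_sq_real, real_inner_smul_right, norm_smul]
    simp [mul_pow, sq_abs]
    ring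
  constructor
  · nlinarith [hsum, eI, mul_nonneg hcpos.le (sq_nonneg ‖m‖)]
  · have hLm : ‖m‖ ^ 2 ≤ L * ⟪m, x - y⟫ := by
      have := mul_le_mul_of_nonneg_left hsum hLpos.le
      rw [← mul_assoc, mul_comm L c, hcL, one_mul] at this
      linarith
    rw [eI, eN, hL] at hLm
    nlinarith [hLm]


end aux

set_option maxHeartbeats 1000000 in
theorem gradient_step_averaged_general
    (n : ℕ)
    (f : EuclideanSpace ℝ (Fin n) → ℝ)
    (f' : EuclideanSpace ℝ (Fin n) → EuclideanSpace ℝ (Fin n))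
    (hf' : ∀ x, HasGradientAt f (f' x) x)
    (ρ σ α : ℝ) (hρ : 0 ≤ ρ) (hσρ : ρ < σ)
    (hstrong : ConvexOn ℝ univ (fun x => f x - ρ / 2 * ‖x‖ ^ 2))
    (hlip : ∀ x y, ‖f' x - f' y‖ ≤ σ * ‖x - y‖)
    (hα : 0 < α) (hα2 : α < 2 / (σ + ρ))
    (V : EuclideanSpace ℝ (Fin n) → EuclideanSpace ℝ (Fin n))
    (hV : ∀ x, V x = (1 / (1 - α * ρ)) • (x - α • f' x)) :
    α * (σ + ρ) / 2 ∈ Ioo (0 : ℝ) 1 ∧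
      ∃ U : EuclideanSpace ℝ (Fin n) → EuclideanSpace ℝ (Fin n),
        LipschitzWith 1 U ∧
          ∀ x, V x = (1 - α * (σ + ρ) / 2) • x + (α * (σ + ρ) / 2) • U x := by
  have hσρ0 : 0 < σ + ρ := by linarith
  have hαsum : α * (σ + ρ) < 2 := by
    rw [lt_div_iff₀ hσρ0] at hα2; linarith
  set β : ℝ := α * (σ + ρ) / 2 with hβ
  have hβpos : 0 < β := by positivity
  have hβ1 : β < 1 := by rw [hβ]; linarith
  have ht1 : α * ρ < 1 := by nlinarith
  have htpos : 0 < 1 - α * ρ := by linarith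
  set U : EuclideanSpace ℝ (Fin n) → EuclideanSpace ℝ (Fin n) :=
    fun z => β⁻¹ • (V z - (1 - β) • z) with hU
  refine ⟨⟨hβpos, hβ1⟩, U, ?_, ?_⟩
  · -- Lipschitz
    rw [lipschitzWith_iff_dist_le_mul]
    intro x y
    rw [dist_eq_norm, dist_eq_norm, NNReal.coe_one, one_mul]
    have hkey : (β * (1 - α * ρ)) • (U x - U y)
        = (α * ρ + β * (1 - α * ρ)) • (x - y) - α • (f' x - f' y) := by
      rw [hU]
      simp only []
      rw [hV x, hV y]
      match_scalars <;> field_simp <;> ring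
    set A : ℝ := α * ρ + β * (1 - α * ρ) with hA
    clear_value A
    have hexp : ‖A • (x - y) - α • (f' x - f' y)‖ ^ 2
        = A ^ 2 * ‖x - y‖ ^ 2 - 2 * A * α * ⟪f' x - f' y, x - y⟫
          + α ^ 2 * ‖f' x - f' y‖ ^ 2 := by
      rw [norm_sub_sq_real, real_inner_smul_left, real_inner_smul_right,
        norm_smul, norm_smul, real_inner_comm]
      simp [mul_pow, sq_abs]
      ring
    have hL : ‖(β * (1 - α * ρ)) • (U x - U y)‖ ^ 2
        = (β * (1 - α * ρ)) ^ 2 * ‖U x - U y‖ ^ 2 := by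
      rw [norm_smul]
      simp [mul_pow, sq_abs]
    obtain ⟨hk1, hk2⟩ := coco hf' hρ hσρ hstrong hlip x y
    have hsq : (β * (1 - α * ρ)) ^ 2 * ‖U x - U y‖ ^ 2
        ≤ (β * (1 - α * ρ)) ^ 2 * ‖x - y‖ ^ 2 := by
      rw [← hL, hkey, hexp, hA, hβ]
      nlinarith [mul_nonneg (sq_nonneg α) (sub_nonneg.2 hk2),
        mul_nonneg (mul_nonneg (mul_nonneg (mul_nonneg (by norm_num : (0:ℝ) ≤ 2) hα.le)
          (mul_nonneg hα.le hρ)) (by linarith : (0:ℝ) ≤ 1 - α * (σ + ρ) / 2))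
          (sub_nonneg.2 hk1)]
    have hc2 : 0 < (β * (1 - α * ρ)) ^ 2 := by positivity
    have h2 : ‖U x - U y‖ ^ 2 ≤ ‖x - y‖ ^ 2 := le_of_mul_le_mul_left hsq hc2
    nlinarith [norm_nonneg (U x - U y), norm_nonneg (x - y)]
  · intro x
    rw [hU]
    simp only []
    rw [smul_smul, mul_inv_cancel₀ hβpos.ne', one_smul]
    module
end

section
/- Let P : ℝⁿ → ℝ be ρ-weakly convex, f : ℝⁿ → ℝ differentiable ρ-strongly convex with σ-Lipschitz gradient (σ > ρ ≥ 0), and 0 < α < 2/(σ + ρ). Assume f + P has at least one minimizer. Then the ISTA iterates x^{k+1} = T_α(x^k − α∇f(x^k)) converge to a minimizer of f + P. -/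
open Set Filter
open Set Filter Topology
open scoped RealInnerProductSpace

set_option maxHeartbeats 1000000

section IstaHelpers

variable {E : Type*} [NormedAddCommGroup E] [InnerProductSpace ℝ E]

lemma ista_two_sq (a b : E) : ‖a + b‖ ^ 2 ≤ 2 * ‖a‖ ^ 2 + 2 * ‖b‖ ^ 2 := by
  have h := norm_add_sq_real a b
  have hCS : ⟪a, b⟫ ≤ ‖a‖ * ‖b‖ := real_inner_le_norm a b
  nlinarith [sq_nonneg (‖a‖ - ‖b‖)]

lemma ista_sq_shift (a b : E) : ‖b‖ ^ 2 = ‖a‖ ^ 2 + 2 * ⟪a, b - a⟫ + ‖b - a‖ ^ 2 := by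
  simp only [← real_inner_self_eq_norm_sq, inner_sub_left, inner_sub_right]
  rw [real_inner_comm b a]
  ring

lemma ista_exp1 (p q : E) (c : ℝ) :
    ‖p + c • q‖ ^ 2 = ‖p‖ ^ 2 + 2 * c * ⟪q, p⟫ + c ^ 2 * ‖q‖ ^ 2 := by
  simp only [← real_inner_self_eq_norm_sq, inner_add_left, inner_add_right,
    real_inner_smul_left, real_inner_smul_right]
  rw [real_inner_comm p q]
  ring

lemma ista_norm_combo (a b : E) (l : ℝ) :
    ‖l • a + (1 - l) • b‖ ^ 2
      = l * ‖a‖ ^ 2 + (1 - l) * ‖b‖ ^ 2 - l * (1 - l) * ‖a - b‖ ^ 2 := by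
  simp only [← real_inner_self_eq_norm_sq, inner_add_left, inner_add_right,
    inner_sub_left, inner_sub_right, real_inner_smul_left, real_inner_smul_right]
  rw [real_inner_comm b a]
  ring

lemma ista_four_norm_id (t₁ t₂ z₁ z₂ : E) :
    ‖t₂ - z₁‖ ^ 2 + ‖t₁ - z₂‖ ^ 2 - ‖t₁ - z₁‖ ^ 2 - ‖t₂ - z₂‖ ^ 2
      = 2 * ⟪t₁ - t₂, z₁ - z₂⟫ := by
  simp only [← real_inner_self_eq_norm_sq, inner_sub_left, inner_sub_right]
  rw [real_inner_comm z₁ t₂, real_inner_comm z₂ t₁, real_inner_comm z₁ t₁,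
    real_inner_comm z₂ t₂]
  ring

lemma ista_convex_sub_linear (g : E → ℝ) (c : E) (hconv : ConvexOn ℝ univ g) :
    ConvexOn ℝ univ (fun z => g z - ⟪c, z⟫) := by
  refine ⟨convex_univ, fun a _ b _ μ ν hμ hν hμν => ?_⟩
  have := hconv.2 (mem_univ a) (mem_univ b) hμ hν hμν
  simp only [smul_eq_mul] at *
  have hinner : ⟪c, μ • a + ν • b⟫ = μ * ⟪c, a⟫ + ν * ⟪c, b⟫ := by
    rw [inner_add_right, real_inner_smul_right, real_inner_smul_right]
  rw [hinner]
  linarith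

variable [CompleteSpace E]

lemma ista_grad_sub {g₁ g₂ : E → ℝ} {a b x : E} (h₁ : HasGradientAt g₁ a x)
    (h₂ : HasGradientAt g₂ b x) : HasGradientAt (fun z => g₁ z - g₂ z) (a - b) x := by
  rw [hasGradientAt_iff_hasFDerivAt] at *
  rw [map_sub]; exact h₁.sub h₂

lemma ista_grad_sq (c : ℝ) (x : E) :
    HasGradientAt (fun z : E => c / 2 * ‖z‖ ^ 2) (c • x) x := by
  rw [hasGradientAt_iff_hasFDerivAt]
  have h1 : HasFDerivAt (fun z : E => ⟪z, z⟫) ((innerSL ℝ x) + (innerSL ℝ x)) x := by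
    have := (hasFDerivAt_id x).inner ℝ (hasFDerivAt_id x)
    refine this.congr_fderiv ?_
    ext v
    simp [fderivInnerCLM, real_inner_comm]
  have h2 : HasFDerivAt (fun z : E => c / 2 * ⟪z, z⟫)
      ((c / 2) • ((innerSL ℝ x) + (innerSL ℝ x))) x := h1.const_mul (c / 2)
  have : (fun z : E => c / 2 * ‖z‖ ^ 2) = fun z : E => c / 2 * ⟪z, z⟫ := by
    funext z; rw [real_inner_self_eq_norm_sq]
  rw [this]
  refine h2.congr_fderiv ?_
  ext v
  simp [InnerProductSpace.toDual_apply_apply, real_inner_smul_left]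
  ring

lemma ista_grad_inner_const (c : E) (x : E) : HasGradientAt (fun z : E => ⟪c, z⟫) c x := by
  rw [hasGradientAt_iff_hasFDerivAt]
  exact (InnerProductSpace.toDual ℝ E c).hasFDerivAt

lemma ista_line_deriv (g : E → ℝ) (g' : E → E) (hg : ∀ x, HasGradientAt g (g' x) x)
    (x d : E) (t : ℝ) :
    HasDerivAt (fun s : ℝ => g (x + s • d)) ⟪g' (x + t • d), d⟫ t := by
  have hc : HasDerivAt (fun s : ℝ => x + s • d) d t := by
    simpa using ((hasDerivAt_id t).smul_const d).const_add x
  have hF := (hg (x + t • d)).hasFDerivAt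
  have := hF.comp_hasDerivAt t hc
  simpa [InnerProductSpace.toDual_apply_apply, Function.comp_def] using this

lemma ista_grad_ineq (g : E → ℝ) (g' : E → E) (hg : ∀ x, HasGradientAt g (g' x) x)
    (hconv : ConvexOn ℝ univ g) (x y : E) :
    g x + ⟪g' x, y - x⟫ ≤ g y := by
  set d := y - x with hd
  have hder : HasDerivAt (fun s : ℝ => g (x + s • d)) ⟪g' x, d⟫ 0 := by
    simpa using ista_line_deriv g g' hg x d 0
  have hslope : Tendsto (slope (fun s : ℝ => g (x + s • d)) 0) (𝓝[>] 0)
      (𝓝 ⟪g' x, d⟫) :=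
    (hasDerivAt_iff_tendsto_slope.1 hder).mono_left
      (nhdsWithin_mono _ fun t ht => by simpa using ne_of_gt ht)
  have hev : ∀ᶠ t in 𝓝[>] (0:ℝ), slope (fun s : ℝ => g (x + s • d)) 0 t ≤ g y - g x := by
    filter_upwards [Ioo_mem_nhdsGT_of_mem (by norm_num : (0:ℝ) ∈ Ico (0:ℝ) 1)] with t ht
    have ht0 : 0 < t := ht.1
    have ht1 : t < 1 := ht.2
    have hcomb := hconv.2 (mem_univ x) (mem_univ y) (by linarith : (0:ℝ) ≤ 1 - t)
      (le_of_lt ht0) (by ring)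
    have hpt : x + t • d = (1 - t) • x + t • y := by
      simp [hd, smul_sub, sub_smul]; abel
    rw [slope_def_field]
    have : g (x + t • d) ≤ (1 - t) * g x + t * g y := by rw [hpt]; simpa using hcomb
    rw [sub_zero, zero_smul, add_zero, div_le_iff₀ ht0]
    nlinarith
  have := le_of_tendsto hslope hev
  linarith

lemma ista_descent (g : E → ℝ) (g' : E → E) (hg : ∀ x, HasGradientAt g (g' x) x)
    (L : ℝ) (hL : 0 ≤ L) (hlip : ∀ x y, ‖g' x - g' y‖ ≤ L * ‖x - y‖) (x y : E) :
    g y ≤ g x + ⟪g' x, y - x⟫ + L / 2 * ‖y - x‖ ^ 2 := by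
  set d := y - x with hd
  have hcont : Continuous g' := by
    have : LipschitzWith L.toNNReal g' := by
      apply LipschitzWith.of_dist_le_mul
      intro a b
      rw [dist_eq_norm, dist_eq_norm, Real.coe_toNNReal L hL]
      exact hlip a b
    exact this.continuous
  have hder : ∀ t ∈ uIcc (0:ℝ) 1,
      HasDerivAt (fun s : ℝ => g (x + s • d)) ⟪g' (x + t • d), d⟫ t :=
    fun t _ => ista_line_deriv g g' hg x d t
  have hcont' : Continuous fun t : ℝ => ⟪g' (x + t • d), d⟫ := by
    exact (hcont.comp (continuous_const.add (continuous_id.smul continuous_const))).inner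
      continuous_const
  have hint : IntervalIntegrable (fun t : ℝ => ⟪g' (x + t • d), d⟫) MeasureTheory.volume 0 1 :=
    hcont'.intervalIntegrable 0 1
  have hftc : ∫ t in (0:ℝ)..1, ⟪g' (x + t • d), d⟫ = g (x + (1:ℝ) • d) - g (x + (0:ℝ) • d) :=
    intervalIntegral.integral_eq_sub_of_hasDerivAt hder hint
  have key : ∫ t in (0:ℝ)..1, ⟪g' (x + t • d), d⟫ ≤ ⟪g' x, d⟫ + L / 2 * ‖d‖ ^ 2 := by
    have hmono : ∀ t ∈ Icc (0:ℝ) 1, ⟪g' (x + t • d), d⟫ ≤ ⟪g' x, d⟫ + L * t * ‖d‖ ^ 2 := by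
      intro t ht
      have h1 : ⟪g' (x + t • d) - g' x, d⟫ ≤ ‖g' (x + t • d) - g' x‖ * ‖d‖ :=
        real_inner_le_norm _ _
      have h2 : ‖g' (x + t • d) - g' x‖ ≤ L * (t * ‖d‖) := by
        have := hlip (x + t • d) x
        simpa [norm_smul, abs_of_nonneg ht.1] using this
      have h3 : ⟪g' (x + t • d) - g' x, d⟫ ≤ L * t * ‖d‖ ^ 2 := by
        calc ⟪g' (x + t • d) - g' x, d⟫ ≤ ‖g' (x + t • d) - g' x‖ * ‖d‖ := h1
        _ ≤ L * (t * ‖d‖) * ‖d‖ := by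
            apply mul_le_mul_of_nonneg_right h2 (norm_nonneg _)
        _ = L * t * ‖d‖ ^ 2 := by ring
      have := inner_sub_left (𝕜 := ℝ) (g' (x + t • d)) (g' x) d
      linarith [h3, this.symm.le, this.le]
    have hub : IntervalIntegrable (fun t : ℝ => ⟪g' x, d⟫ + L * t * ‖d‖ ^ 2)
        MeasureTheory.volume 0 1 :=
      (Continuous.intervalIntegrable (by continuity) 0 1)
    have := intervalIntegral.integral_mono_on (by norm_num : (0:ℝ) ≤ 1) hint hub hmono
    calc ∫ t in (0:ℝ)..1, ⟪g' (x + t • d), d⟫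
        ≤ ∫ t in (0:ℝ)..1, (⟪g' x, d⟫ + L * t * ‖d‖ ^ 2) := this
      _ = ⟪g' x, d⟫ + L / 2 * ‖d‖ ^ 2 := by
          rw [intervalIntegral.integral_add (Continuous.intervalIntegrable (by continuity) 0 1)
            (Continuous.intervalIntegrable (by continuity) 0 1)]
          simp only [intervalIntegral.integral_const, smul_eq_mul]
          have : ∫ t in (0:ℝ)..1, L * t * ‖d‖ ^ 2 = L * ‖d‖^2 * ∫ t in (0:ℝ)..1, t := by
            rw [← intervalIntegral.integral_const_mul]
            congr 1; funext t; ring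
          rw [this, integral_id]
          ring
  rw [hftc] at key
  simp only [one_smul, zero_smul, add_zero] at key
  have : x + d = y := by rw [hd]; abel
  rw [this] at key
  linarith

lemma ista_coco (h : E → ℝ) (h' : E → E) (hg : ∀ x, HasGradientAt h (h' x) x)
    (hconv : ConvexOn ℝ univ h) (L : ℝ) (hL : 0 < L)
    (hdesc : ∀ x y, h y ≤ h x + ⟪h' x, y - x⟫ + L / 2 * ‖y - x‖ ^ 2) :
    ∀ x y, 1 / L * ‖h' x - h' y‖ ^ 2 ≤ ⟪h' x - h' y, x - y⟫ := by
  have half : ∀ x z, h x + ⟪h' x, z - x⟫ + 1 / (2 * L) * ‖h' z - h' x‖ ^ 2 ≤ h z := by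
    intro x z
    set φ := fun w : E => h w - ⟪h' x, w⟫ with hφ
    set φ' := fun w : E => h' w - h' x with hφ'
    have hgφ : ∀ w, HasGradientAt φ (φ' w) w := fun w =>
      ista_grad_sub (hg w) (ista_grad_inner_const (h' x) w)
    have hφconv : ConvexOn ℝ univ φ := ista_convex_sub_linear h (h' x) hconv
    have hmin : ∀ w, φ x ≤ φ w := by
      intro w
      have := ista_grad_ineq φ φ' hgφ hφconv x w
      have h0 : φ' x = 0 := by simp [hφ']
      rw [h0] at this
      simpa using this
    have hφdesc : φ (z - (1 / L) • φ' z) ≤ φ z - 1 / (2 * L) * ‖φ' z‖ ^ 2 := by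
      have hd := hdesc z (z - (1 / L) • φ' z)
      have e1 : z - (1 / L) • φ' z - z = -((1 / L) • φ' z) := by abel
      have e2 : ⟪h' z, -((1 / L) • φ' z)⟫ = -(1 / L) * ⟪h' z, φ' z⟫ := by
        rw [inner_neg_right, real_inner_smul_right]; ring
      have e3 : ‖-((1 / L) • φ' z)‖ ^ 2 = (1 / L) ^ 2 * ‖φ' z‖ ^ 2 := by
        rw [norm_neg, norm_smul, Real.norm_eq_abs, abs_of_pos (by positivity : (0:ℝ) < 1 / L)]
        ring
      have e4 : ⟪h' x, z - (1 / L) • φ' z⟫ = ⟪h' x, z⟫ - 1 / L * ⟪h' x, φ' z⟫ := by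
        rw [inner_sub_right, real_inner_smul_right]
      have e5 : ⟪h' z, φ' z⟫ - ⟪h' x, φ' z⟫ = ‖φ' z‖ ^ 2 := by
        rw [← inner_sub_left, ← real_inner_self_eq_norm_sq]
      simp only [hφ]
      rw [e1, e2, e3] at hd
      rw [e4]
      have hLne : L ≠ 0 := ne_of_gt hL
      have q1 : L / 2 * ((1 / L) ^ 2 * ‖φ' z‖ ^ 2) = 1 / (2 * L) * ‖φ' z‖ ^ 2 := by
        field_simp
      have q2 : 1 / L * ⟪h' z, φ' z⟫ - 1 / L * ⟪h' x, φ' z⟫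
          = 1 / (2 * L) * ‖φ' z‖ ^ 2 + 1 / (2 * L) * ‖φ' z‖ ^ 2 := by
        rw [show 1 / L * ⟪h' z, φ' z⟫ - 1 / L * ⟪h' x, φ' z⟫
            = 1 / L * (⟪h' z, φ' z⟫ - ⟪h' x, φ' z⟫) by ring, e5]
        field_simp; ring
      linarith [hd, q1, q2]
    have := le_trans (hmin (z - (1 / L) • φ' z)) hφdesc
    simp only [hφ, hφ'] at this
    have einner : ⟪h' x, z⟫ - ⟪h' x, x⟫ = ⟪h' x, z - x⟫ := by rw [inner_sub_right]
    linarith [this, einner.le, einner.ge]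
  intro x y
  have h1 := half x y
  have h2 := half y x
  have e1 : ⟪h' x, y - x⟫ + ⟪h' y, x - y⟫ = -⟪h' x - h' y, x - y⟫ := by
    rw [inner_sub_left]
    have : (x - y) = -(y - x) := by abel
    rw [this, inner_neg_right, inner_neg_right]
    ring
  have e2 : ‖h' x - h' y‖ = ‖h' y - h' x‖ := by rw [← norm_neg]; congr 1; abel
  rw [e2]
  have q : 1 / (2 * L) * ‖h' y - h' x‖ ^ 2 + 1 / (2 * L) * ‖h' y - h' x‖ ^ 2
      = 1 / L * ‖h' y - h' x‖ ^ 2 := by field_simp; ring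
  have e2' : ‖h' x - h' y‖ ^ 2 = ‖h' y - h' x‖ ^ 2 := by rw [e2]
  have q2 : 1 / (2 * L) * ‖h' x - h' y‖ ^ 2 = 1 / (2 * L) * ‖h' y - h' x‖ ^ 2 := by rw [e2']
  linarith [h1, h2, e1, q, q2]

lemma ista_prox_strong (α ρ : ℝ) (hα : 0 < α)
    (P : E → ℝ) (hweak : ConvexOn ℝ univ (fun x => P x + ρ / 2 * ‖x‖ ^ 2))
    (T : E → E)
    (hT : ∀ z t, 1 / (2 * α) * ‖T z - z‖ ^ 2 + P (T z) ≤ 1 / (2 * α) * ‖t - z‖ ^ 2 + P t)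
    (z y : E) :
    1 / (2 * α) * ‖T z - z‖ ^ 2 + P (T z) + (1 / α - ρ) / 2 * ‖y - T z‖ ^ 2
      ≤ 1 / (2 * α) * ‖y - z‖ ^ 2 + P y := by
  set g : E → ℝ := fun t => 1 / (2 * α) * ‖t - z‖ ^ 2 + P t with hgdef
  set μ : ℝ := 1 / α - ρ with hμ
  have hsc : ∀ l : ℝ, 0 ≤ l → l ≤ 1 → ∀ a b : E,
      g (l • a + (1 - l) • b) ≤ l * g a + (1 - l) * g b
        - μ / 2 * (l * (1 - l)) * ‖a - b‖ ^ 2 := by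
    intro l hl0 hl1 a b
    have hc := hweak.2 (mem_univ a) (mem_univ b) hl0 (by linarith : 0 ≤ 1 - l) (by ring)
    simp only [smul_eq_mul] at hc
    have e1 : l • a + (1 - l) • b - z = l • (a - z) + (1 - l) • (b - z) := by
      module
    have e2 : ‖l • a + (1 - l) • b - z‖ ^ 2
        = l * ‖a - z‖ ^ 2 + (1 - l) * ‖b - z‖ ^ 2 - l * (1 - l) * ‖a - b‖ ^ 2 := by
      rw [e1]
      have := ista_norm_combo (a - z) (b - z) l
      rw [this]
      have : a - z - (b - z) = a - b := by abel
      rw [this]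
    have e3 : ‖l • a + (1 - l) • b‖ ^ 2
        = l * ‖a‖ ^ 2 + (1 - l) * ‖b‖ ^ 2 - l * (1 - l) * ‖a - b‖ ^ 2 := ista_norm_combo a b l
    simp only [hgdef, hμ]
    have hα' : (0:ℝ) < 2 * α := by linarith
    have key : 1 / (2 * α) * ‖l • a + (1 - l) • b - z‖ ^ 2
        - ρ / 2 * ‖l • a + (1 - l) • b‖ ^ 2
        = l * (1 / (2 * α) * ‖a - z‖ ^ 2 - ρ / 2 * ‖a‖ ^ 2)
          + (1 - l) * (1 / (2 * α) * ‖b - z‖ ^ 2 - ρ / 2 * ‖b‖ ^ 2)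
          - (1 / α - ρ) / 2 * (l * (1 - l)) * ‖a - b‖ ^ 2 := by
      rw [e2, e3]
      field_simp
      ring
    linarith [hc, key]
  have hlim : ∀ l : ℝ, 0 < l → l < 1 →
      μ / 2 * (1 - l) * ‖y - T z‖ ^ 2 ≤ g y - g (T z) := by
    intro l hl0 hl1
    have hmin := hT z (l • y + (1 - l) • T z)
    have hsc' := hsc l (le_of_lt hl0) (le_of_lt hl1) y (T z)
    have : g (T z) ≤ l * g y + (1 - l) * g (T z) - μ / 2 * (l * (1 - l)) * ‖y - T z‖ ^ 2 :=
      le_trans hmin hsc'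
    have h2 : μ / 2 * (l * (1 - l)) * ‖y - T z‖ ^ 2 ≤ l * (g y - g (T z)) := by linarith
    have h3 : l * (μ / 2 * (1 - l) * ‖y - T z‖ ^ 2) ≤ l * (g y - g (T z)) := by
      calc l * (μ / 2 * (1 - l) * ‖y - T z‖ ^ 2)
          = μ / 2 * (l * (1 - l)) * ‖y - T z‖ ^ 2 := by ring
        _ ≤ l * (g y - g (T z)) := h2
    exact le_of_mul_le_mul_left (by linarith [h3]) hl0
  have htend : Tendsto (fun l : ℝ => μ / 2 * (1 - l) * ‖y - T z‖ ^ 2) (𝓝[>] 0)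
      (𝓝 (μ / 2 * ‖y - T z‖ ^ 2)) := by
    have : Continuous (fun l : ℝ => μ / 2 * (1 - l) * ‖y - T z‖ ^ 2) := by continuity
    have h0 := this.tendsto 0
    simp only [sub_zero, mul_one] at h0
    exact h0.mono_left nhdsWithin_le_nhds
  have hfin : μ / 2 * ‖y - T z‖ ^ 2 ≤ g y - g (T z) := by
    apply le_of_tendsto htend
    filter_upwards [Ioo_mem_nhdsGT_of_mem (by norm_num : (0:ℝ) ∈ Ico (0:ℝ) 1)] with l hl
    exact hlim l hl.1 hl.2
  simp only [hgdef] at hfin ⊢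
  linarith [hfin]

lemma ista_alg (α ρ σ : ℝ) (hα : 0 < α) (hρ : 0 ≤ ρ) (hσρ : ρ < σ) (hα2 : α < 2 / (σ + ρ))
    (hγ : 0 < 1 - α * ρ)
    (u s e v : E)
    (hve : v = (1 - α * ρ) • u - α • e)
    (hco : 1 / (σ - ρ) * ‖e‖ ^ 2 ≤ ⟪e, u⟫)
    (hp : (1 - α * ρ) * ‖s‖ ^ 2 ≤ ⟪s, v⟫) :
    ‖s‖ ^ 2 + min (α * (2 - α * (σ + ρ)) / (σ - ρ) / (2 * α ^ 2)) (1 / 2) * ‖u - s‖ ^ 2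
      ≤ ‖u‖ ^ 2 := by
  set γ : ℝ := 1 - α * ρ with hγdef
  set β : ℝ := α * (2 - α * (σ + ρ)) / (σ - ρ) with hβdef
  set κ : ℝ := min (β / (2 * α ^ 2)) (1 / 2) with hκdef
  have hσρ' : (0:ℝ) < σ - ρ := by linarith
  have hsum : (0:ℝ) < σ + ρ := by linarith
  have h2a : 0 < 2 - α * (σ + ρ) := by
    have := (lt_div_iff₀ hsum).1 hα2
    linarith
  have hβpos : 0 < β := by
    apply div_pos (by positivity) hσρ'
  have S1 : ‖v‖ ^ 2 = γ ^ 2 * ‖u‖ ^ 2 - 2 * α * γ * ⟪e, u⟫ + α ^ 2 * ‖e‖ ^ 2 := by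
    simp only [hve, ← real_inner_self_eq_norm_sq, inner_sub_left, inner_sub_right,
      real_inner_smul_left, real_inner_smul_right]
    rw [real_inner_comm u e]
    ring
  have hβid : β = 2 * α * γ / (σ - ρ) - α ^ 2 := by
    rw [hβdef, hγdef]
    field_simp
    ring
  have S2 : ‖v‖ ^ 2 ≤ γ ^ 2 * ‖u‖ ^ 2 - β * ‖e‖ ^ 2 := by
    have hmul := mul_le_mul_of_nonneg_left hco
      (by positivity : (0:ℝ) ≤ 2 * α * γ)
    rw [S1, hβid]
    have : 2 * α * γ * (1 / (σ - ρ) * ‖e‖ ^ 2) = 2 * α * γ / (σ - ρ) * ‖e‖ ^ 2 := by ring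
    rw [this] at hmul
    nlinarith [hmul]
  have S3 : ‖v - γ • s‖ ^ 2 + γ ^ 2 * ‖s‖ ^ 2 ≤ ‖v‖ ^ 2 := by
    have hexp : ‖v - γ • s‖ ^ 2 = ‖v‖ ^ 2 - 2 * γ * ⟪s, v⟫ + γ ^ 2 * ‖s‖ ^ 2 := by
      simp only [← real_inner_self_eq_norm_sq, inner_sub_left, inner_sub_right,
        real_inner_smul_left, real_inner_smul_right]
      rw [real_inner_comm v s]
      ring
    nlinarith [mul_le_mul_of_nonneg_left hp (by positivity : (0:ℝ) ≤ 2 * γ)]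
  have S4 : γ ^ 2 * ‖u - s‖ ^ 2 ≤ 2 * ‖v - γ • s‖ ^ 2 + 2 * α ^ 2 * ‖e‖ ^ 2 := by
    have hid : γ • (u - s) = (v - γ • s) + α • e := by
      rw [hve]; module
    have h1 : ‖γ • (u - s)‖ ^ 2 = γ ^ 2 * ‖u - s‖ ^ 2 := by
      rw [norm_smul, Real.norm_eq_abs, mul_pow, sq_abs]
    have h2 : ‖α • e‖ ^ 2 = α ^ 2 * ‖e‖ ^ 2 := by
      rw [norm_smul, Real.norm_eq_abs, mul_pow, sq_abs]
    have h3 : ‖(v - γ • s) + α • e‖ ^ 2 ≤ 2 * ‖v - γ • s‖ ^ 2 + 2 * ‖α • e‖ ^ 2 :=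
      ista_two_sq _ _
    calc γ ^ 2 * ‖u - s‖ ^ 2 = ‖γ • (u - s)‖ ^ 2 := h1.symm
      _ = ‖(v - γ • s) + α • e‖ ^ 2 := by rw [hid]
      _ ≤ 2 * ‖v - γ • s‖ ^ 2 + 2 * ‖α • e‖ ^ 2 := h3
      _ = 2 * ‖v - γ • s‖ ^ 2 + 2 * α ^ 2 * ‖e‖ ^ 2 := by rw [h2]; ring
  have hκ1 : κ ≤ β / (2 * α ^ 2) := min_le_left _ _
  have hκ2 : κ ≤ 1 / 2 := min_le_right _ _
  have hκ0 : 0 ≤ κ := le_min (by positivity) (by norm_num)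
  have hbound : κ * (γ ^ 2 * ‖u - s‖ ^ 2) ≤ β * ‖e‖ ^ 2 + ‖v - γ • s‖ ^ 2 := by
    have c1 : κ * (2 * α ^ 2 * ‖e‖ ^ 2) ≤ β * ‖e‖ ^ 2 := by
      have := mul_le_mul_of_nonneg_right hκ1 (by positivity : (0:ℝ) ≤ 2 * α ^ 2 * ‖e‖ ^ 2)
      calc κ * (2 * α ^ 2 * ‖e‖ ^ 2) ≤ β / (2 * α ^ 2) * (2 * α ^ 2 * ‖e‖ ^ 2) := this
        _ = β * ‖e‖ ^ 2 := by field_simp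
    have c2 : κ * (2 * ‖v - γ • s‖ ^ 2) ≤ ‖v - γ • s‖ ^ 2 := by
      nlinarith [sq_nonneg ‖v - γ • s‖]
    have c3 := mul_le_mul_of_nonneg_left S4 hκ0
    linarith [c1, c2, c3]
  have final : γ ^ 2 * (‖s‖ ^ 2 + κ * ‖u - s‖ ^ 2) ≤ γ ^ 2 * ‖u‖ ^ 2 := by
    nlinarith [S2, S3, hbound]
  exact le_of_mul_le_mul_left final (by positivity : (0:ℝ) < γ ^ 2)

end IstaHelpers

theorem ista_converges_general_data_term
    (n : ℕ)
    (P f : EuclideanSpace ℝ (Fin n) → ℝ)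
    (f' : EuclideanSpace ℝ (Fin n) → EuclideanSpace ℝ (Fin n))
    (hf' : ∀ x, HasGradientAt f (f' x) x)
    (ρ σ α : ℝ) (hρ : 0 ≤ ρ) (hσρ : ρ < σ)
    (hweak : ConvexOn ℝ univ (fun x => P x + ρ / 2 * ‖x‖ ^ 2))
    (hstrong : ConvexOn ℝ univ (fun x => f x - ρ / 2 * ‖x‖ ^ 2))
    (hlip : ∀ x y, ‖f' x - f' y‖ ≤ σ * ‖x - y‖)
    (hα : 0 < α) (hα2 : α < 2 / (σ + ρ))
    (hminex : ∃ w, ∀ z, f w + P w ≤ f z + P z)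
    (T : EuclideanSpace ℝ (Fin n) → EuclideanSpace ℝ (Fin n))
    (hT : ∀ z t, 1 / (2 * α) * ‖T z - z‖ ^ 2 + P (T z) ≤ 1 / (2 * α) * ‖t - z‖ ^ 2 + P t)
    (x : ℕ → EuclideanSpace ℝ (Fin n))
    (hrec : ∀ k, x (k + 1) = T (x k - α • f' (x k))) :
    ∃ L, Tendsto x atTop (nhds L) ∧ ∀ z, f L + P L ≤ f z + P z := by
  obtain ⟨w, hw⟩ := hminex
  have hσ0 : (0:ℝ) ≤ σ := le_trans hρ (le_of_lt hσρ)
  have hsum : (0:ℝ) < σ + ρ := by linarith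
  have h2a : 0 < 2 - α * (σ + ρ) := by
    have := (lt_div_iff₀ hsum).1 hα2
    linarith
  have hγ : 0 < 1 - α * ρ := by nlinarith [mul_pos hα (show (0:ℝ) < σ - ρ by linarith)]
  have hμpos : 0 < 1 / α - ρ := by
    have : 1 / α - ρ = (1 - α * ρ) / α := by field_simp
    rw [this]; positivity
  set Φ : EuclideanSpace ℝ (Fin n) → EuclideanSpace ℝ (Fin n) := fun y => T (y - α • f' y) with hΦdef
  set h : EuclideanSpace ℝ (Fin n) → ℝ := fun z => f z - ρ / 2 * ‖z‖ ^ 2 with hhdef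
  set h' : EuclideanSpace ℝ (Fin n) → EuclideanSpace ℝ (Fin n) := fun z => f' z - ρ • z with hh'def
  have hgradh : ∀ z, HasGradientAt h (h' z) z := fun z =>
    ista_grad_sub (hf' z) (ista_grad_sq ρ z)
  have hhconv : ConvexOn ℝ univ h := hstrong
  -- strong convexity inequality for f
  have hsc : ∀ a b : EuclideanSpace ℝ (Fin n), f a + ⟪f' a, b - a⟫ + ρ / 2 * ‖b - a‖ ^ 2 ≤ f b := by
    intro a b
    have hgi := ista_grad_ineq h h' hgradh hhconv a b
    simp only [hhdef, hh'def] at hgi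
    have e1 : ⟪f' a - ρ • a, b - a⟫ = ⟪f' a, b - a⟫ - ρ * ⟪a, b - a⟫ := by
      rw [inner_sub_left, real_inner_smul_left]
    have e2 : ρ / 2 * ‖b‖ ^ 2 = ρ / 2 * ‖a‖ ^ 2 + ρ * ⟪a, b - a⟫ + ρ / 2 * ‖b - a‖ ^ 2 := by
      rw [ista_sq_shift a b]; ring
    rw [e1] at hgi
    linarith
  -- descent lemma for h
  have hdesch : ∀ a b : EuclideanSpace ℝ (Fin n), h b ≤ h a + ⟪h' a, b - a⟫ + (σ - ρ) / 2 * ‖b - a‖ ^ 2 := by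
    intro a b
    have hdf := ista_descent f f' hf' σ hσ0 hlip a b
    simp only [hhdef, hh'def]
    have e1 : ⟪f' a - ρ • a, b - a⟫ = ⟪f' a, b - a⟫ - ρ * ⟪a, b - a⟫ := by
      rw [inner_sub_left, real_inner_smul_left]
    have e2 : ρ / 2 * ‖b‖ ^ 2 = ρ / 2 * ‖a‖ ^ 2 + ρ * ⟪a, b - a⟫ + ρ / 2 * ‖b - a‖ ^ 2 := by
      rw [ista_sq_shift a b]; ring
    rw [e1]
    linarith
  have hcoco := ista_coco h h' hgradh hhconv (σ - ρ) (by linarith) hdesch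
  have hprox := ista_prox_strong (E := EuclideanSpace ℝ (Fin n)) α ρ hα P hweak T hT
  -- prox monotonicity
  have hmono : ∀ z₁ z₂ : EuclideanSpace ℝ (Fin n), (1 - α * ρ) * ‖T z₁ - T z₂‖ ^ 2 ≤ ⟪T z₁ - T z₂, z₁ - z₂⟫ := by
    intro z₁ z₂
    have h1 := hprox z₁ (T z₂)
    have h2 := hprox z₂ (T z₁)
    have hid := ista_four_norm_id (T z₁) (T z₂) z₁ z₂
    have e1 : ‖T z₂ - T z₁‖ ^ 2 = ‖T z₁ - T z₂‖ ^ 2 := by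
      rw [norm_sub_rev]
    have hA : (1 / α - ρ) * ‖T z₁ - T z₂‖ ^ 2
        ≤ 1 / (2 * α) * (2 * ⟪T z₁ - T z₂, z₁ - z₂⟫) := by
      have c1 : (1 / α - ρ) / 2 * ‖T z₂ - T z₁‖ ^ 2 = (1 / α - ρ) / 2 * ‖T z₁ - T z₂‖ ^ 2 := by
        rw [e1]
      have c2 : 1 / (2 * α) * (‖T z₂ - z₁‖ ^ 2 + ‖T z₁ - z₂‖ ^ 2 - ‖T z₁ - z₁‖ ^ 2
          - ‖T z₂ - z₂‖ ^ 2) = 1 / (2 * α) * (2 * ⟪T z₁ - T z₂, z₁ - z₂⟫) := by rw [hid]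
      nlinarith [h1, h2, c1, c2, mul_pos (show (0:ℝ) < 1 / (2*α) by positivity)
        (show (0:ℝ) < 1 by norm_num)]
    have hq : 1 / (2 * α) * (2 * ⟪T z₁ - T z₂, z₁ - z₂⟫) = 1 / α * ⟪T z₁ - T z₂, z₁ - z₂⟫ := by
      field_simp
    rw [hq] at hA
    have := mul_le_mul_of_nonneg_left hA (le_of_lt hα)
    calc (1 - α * ρ) * ‖T z₁ - T z₂‖ ^ 2 = α * ((1 / α - ρ) * ‖T z₁ - T z₂‖ ^ 2) := by
          field_simp
      _ ≤ α * (1 / α * ⟪T z₁ - T z₂, z₁ - z₂⟫) := this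
      _ = ⟪T z₁ - T z₂, z₁ - z₂⟫ := by field_simp
  -- averagedness / contraction inequality
  set κ : ℝ := min (α * (2 - α * (σ + ρ)) / (σ - ρ) / (2 * α ^ 2)) (1 / 2) with hκdef
  have hκpos : 0 < κ := by
    apply lt_min
    · apply div_pos (div_pos (by positivity) (by linarith)) (by positivity)
    · norm_num
  have hD : ∀ a b : EuclideanSpace ℝ (Fin n), ‖Φ a - Φ b‖ ^ 2 + κ * ‖(a - b) - (Φ a - Φ b)‖ ^ 2 ≤ ‖a - b‖ ^ 2 := by
    intro a b
    have halg := ista_alg α ρ σ hα hρ hσρ hα2 hγ (a - b) (Φ a - Φ b) (h' a - h' b)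
      ((a - α • f' a) - (b - α • f' b))
      (by simp only [hh'def]; module)
      (hcoco a b)
      (hmono (a - α • f' a) (b - α • f' b))
    exact halg
  -- w is a fixed point of Φ
  have hfix : ∀ L : EuclideanSpace ℝ (Fin n), (∀ y, f L + P L ≤ f y + P y) → Φ L = L := by
    intro L hLmin
    set z : EuclideanSpace ℝ (Fin n) := L - α • f' L with hz
    set t : EuclideanSpace ℝ (Fin n) := T z with ht
    have hp := hprox z L
    rw [← ht] at hp
    have e1 : t - z = (t - L) + α • f' L := by rw [hz]; module
    have e2 : L - z = α • f' L := by rw [hz]; module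
    have n1 : ‖t - z‖ ^ 2 = ‖t - L‖ ^ 2 + 2 * α * ⟪f' L, t - L⟫ + α ^ 2 * ‖f' L‖ ^ 2 := by
      rw [e1, ista_exp1]
    have n2 : ‖L - z‖ ^ 2 = α ^ 2 * ‖f' L‖ ^ 2 := by
      rw [e2, norm_smul, Real.norm_eq_abs, mul_pow, sq_abs]
    have n3 : ‖L - t‖ ^ 2 = ‖t - L‖ ^ 2 := by rw [norm_sub_rev]
    rw [n1, n2, n3] at hp
    have q1 : 1 / (2 * α) * (‖t - L‖ ^ 2 + 2 * α * ⟪f' L, t - L⟫ + α ^ 2 * ‖f' L‖ ^ 2)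
        = 1 / (2 * α) * ‖t - L‖ ^ 2 + ⟪f' L, t - L⟫ + α / 2 * ‖f' L‖ ^ 2 := by
      field_simp
    have q2 : 1 / (2 * α) * (α ^ 2 * ‖f' L‖ ^ 2) = α / 2 * ‖f' L‖ ^ 2 := by
      field_simp
    rw [q1, q2] at hp
    have hmint := hLmin t
    have hdt : f t ≤ f L + ⟪f' L, t - L⟫ + σ / 2 * ‖t - L‖ ^ 2 :=
      ista_descent f f' hf' σ hσ0 hlip L t
    have hp2 : 1 / (2 * α) * ‖t - L‖ ^ 2 + ⟪f' L, t - L⟫ + P t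
        + (1 / α - ρ) / 2 * ‖t - L‖ ^ 2 ≤ P L := by linarith [hp]
    have q3' : 1 / (2 * α) * ‖t - L‖ ^ 2 + (1 / α - ρ) / 2 * ‖t - L‖ ^ 2
        - σ / 2 * ‖t - L‖ ^ 2 = (1 / α - (σ + ρ) / 2) * ‖t - L‖ ^ 2 := by
      field_simp; ring
    have key : (1 / α - (σ + ρ) / 2) * ‖t - L‖ ^ 2 ≤ 0 := by
      linarith [hp2, hmint, hdt, q3']
    have hcoef : 0 < 1 / α - (σ + ρ) / 2 :=
      sub_pos.2 ((div_lt_div_iff₀ (by norm_num) hα).2 (by nlinarith [h2a]))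
    have : ‖t - L‖ ^ 2 ≤ 0 := by
      have hk2 : (1 / α - (σ + ρ) / 2) * ‖t - L‖ ^ 2 ≤ (1 / α - (σ + ρ) / 2) * 0 := by
        rw [mul_zero]; exact key
      exact le_of_mul_le_mul_left hk2 hcoef
    have hnorm : ‖t - L‖ = 0 := by nlinarith [norm_nonneg (t - L)]
    have : t = L := by
      have := norm_eq_zero.1 hnorm
      exact sub_eq_zero.1 this
    simpa [hΦdef, ← hz, ← ht] using this
  -- a fixed point of Φ is a minimizer
  have hfixmin : ∀ L : EuclideanSpace ℝ (Fin n), Φ L = L → ∀ y, f L + P L ≤ f y + P y := by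
    intro L hfixL y
    set z : EuclideanSpace ℝ (Fin n) := L - α • f' L with hz
    have hTz : T z = L := by simpa [hΦdef] using hfixL
    have hp := hprox z y
    rw [hTz] at hp
    have e1 : L - z = α • f' L := by rw [hz]; module
    have e2 : y - z = (y - L) + α • f' L := by rw [hz]; module
    have n1 : ‖L - z‖ ^ 2 = α ^ 2 * ‖f' L‖ ^ 2 := by
      rw [e1, norm_smul, Real.norm_eq_abs, mul_pow, sq_abs]
    have n2 : ‖y - z‖ ^ 2 = ‖y - L‖ ^ 2 + 2 * α * ⟪f' L, y - L⟫ + α ^ 2 * ‖f' L‖ ^ 2 := by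
      rw [e2, ista_exp1]
    rw [n1, n2] at hp
    have q1 : 1 / (2 * α) * (‖y - L‖ ^ 2 + 2 * α * ⟪f' L, y - L⟫ + α ^ 2 * ‖f' L‖ ^ 2)
        = 1 / (2 * α) * ‖y - L‖ ^ 2 + ⟪f' L, y - L⟫ + α / 2 * ‖f' L‖ ^ 2 := by
      field_simp
    have q2 : 1 / (2 * α) * (α ^ 2 * ‖f' L‖ ^ 2) = α / 2 * ‖f' L‖ ^ 2 := by
      field_simp
    rw [q1, q2] at hp
    have hscy := hsc L y
    have q3' : 1 / (2 * α) * ‖y - L‖ ^ 2 - (1 / α - ρ) / 2 * ‖y - L‖ ^ 2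
        = ρ / 2 * ‖y - L‖ ^ 2 := by field_simp; ring
    linarith [hp, hscy, q3']
  have hfixw : Φ w = w := hfix w hw
  have hit : ∀ k, x (k + 1) = Φ (x k) := fun k => hrec k
  -- Fejér monotonicity with respect to w
  have hfej : ∀ k, ‖x (k + 1) - w‖ ^ 2 + κ * ‖x k - x (k + 1)‖ ^ 2 ≤ ‖x k - w‖ ^ 2 := by
    intro k
    have := hD (x k) w
    rw [hfixw, ← hit k] at this
    have e : (x k - w) - (x (k + 1) - w) = x k - x (k + 1) := by abel
    rwa [e] at this
  set a : ℕ → ℝ := fun k => ‖x k - w‖ ^ 2 with hadef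
  have hanti : Antitone a := antitone_nat_of_succ_le fun k => by
    simp only [hadef]
    have hnn : 0 ≤ κ * ‖x k - x (k + 1)‖ ^ 2 := mul_nonneg hκpos.le (sq_nonneg _)
    linarith [hfej k, hnn]
  have habdd : BddBelow (range a) := ⟨0, fun r ⟨k, hk⟩ => hk ▸ sq_nonneg _⟩
  have hconva : Tendsto a atTop (𝓝 (⨅ k, a k)) := tendsto_atTop_ciInf hanti habdd
  have hconva' : Tendsto (fun k => a (k + 1)) atTop (𝓝 (⨅ k, a k)) :=
    hconva.comp (tendsto_add_atTop_nat 1)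
  have hdiff : Tendsto (fun k => a k - a (k + 1)) atTop (𝓝 0) := by
    have := hconva.sub hconva'
    simpa using this
  have hΔsq : Tendsto (fun k => ‖x k - x (k + 1)‖ ^ 2) atTop (𝓝 0) := by
    have hb : ∀ k, ‖x k - x (k + 1)‖ ^ 2 ≤ (a k - a (k + 1)) / κ := by
      intro k
      rw [le_div_iff₀ hκpos]
      simp only [hadef]
      linarith [hfej k]
    have hdiv : Tendsto (fun k => (a k - a (k + 1)) / κ) atTop (𝓝 0) := by
      simpa using hdiff.div_const κ
    exact squeeze_zero (fun k => sq_nonneg _) hb hdiv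
  have hΔ : Tendsto (fun k => ‖x k - x (k + 1)‖) atTop (𝓝 0) := by
    have hs := (Real.continuous_sqrt.tendsto 0).comp hΔsq
    simp only [Function.comp_def, Real.sqrt_zero] at hs
    convert hs using 2 with k
    rw [Real.sqrt_sq (norm_nonneg _)]
  -- bounded iterates, convergent subsequence
  have hball : ∀ k, x k ∈ Metric.closedBall w ‖x 0 - w‖ := by
    intro k
    rw [Metric.mem_closedBall, dist_eq_norm]
    have hk : a k ≤ a 0 := hanti (Nat.zero_le k)
    simp only [hadef] at hk
    nlinarith [norm_nonneg (x k - w), norm_nonneg (x 0 - w), hk]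
  obtain ⟨L, _, φ, hφmono, hφtend⟩ :=
    (isCompact_closedBall w ‖x 0 - w‖).tendsto_subseq hball
  -- L is a fixed point
  have hnonexp : ∀ p q : EuclideanSpace ℝ (Fin n), ‖Φ p - Φ q‖ ≤ ‖p - q‖ := by
    intro p q
    have := hD p q
    nlinarith [norm_nonneg (Φ p - Φ q), norm_nonneg (p - q), hκpos,
      sq_nonneg ‖(p - q) - (Φ p - Φ q)‖]
  have hφatTop : Tendsto φ atTop atTop := hφmono.tendsto_atTop
  have hsub1 : Tendsto (fun j => Φ (x (φ j))) atTop (𝓝 (Φ L)) := by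
    rw [tendsto_iff_dist_tendsto_zero]
    have hble : ∀ j, dist (Φ (x (φ j))) (Φ L) ≤ dist (x (φ j)) L := by
      intro j
      rw [dist_eq_norm, dist_eq_norm]
      exact hnonexp _ _
    have hdist : Tendsto (fun j => dist (x (φ j)) L) atTop (𝓝 0) :=
      (tendsto_iff_dist_tendsto_zero).1 hφtend
    exact squeeze_zero (fun j => dist_nonneg) hble hdist
  have hsub2 : Tendsto (fun j => Φ (x (φ j))) atTop (𝓝 L) := by
    have heq : ∀ j, Φ (x (φ j)) = x (φ j) + (x (φ j + 1) - x (φ j)) := by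
      intro j; rw [← hit (φ j)]; abel
    have hz2 : Tendsto (fun j => x (φ j + 1) - x (φ j)) atTop (𝓝 0) := by
      rw [tendsto_zero_iff_norm_tendsto_zero]
      have := hΔ.comp hφatTop
      apply squeeze_zero (fun j => norm_nonneg _) (fun j => ?_) this
      rw [norm_sub_rev]
      exact le_refl _
    have := hφtend.add hz2
    simp only [add_zero] at this
    simpa only [heq, Function.comp_apply] using this
  have hfixL : Φ L = L := tendsto_nhds_unique hsub1 hsub2
  have hLmin := hfixmin L hfixL
  -- convergence of the whole sequence to L
  refine ⟨L, ?_, hLmin⟩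
  have hfejL : ∀ k, ‖x (k + 1) - L‖ ≤ ‖x k - L‖ := by
    intro k
    have := hD (x k) L
    rw [hfixL, ← hit k] at this
    nlinarith [norm_nonneg (x (k + 1) - L), norm_nonneg (x k - L), hκpos,
      sq_nonneg ‖(x k - L) - (x (k + 1) - L)‖]
  set b : ℕ → ℝ := fun k => ‖x k - L‖ with hbdef
  have hbanti : Antitone b := antitone_nat_of_succ_le fun k => hfejL k
  have hbbdd : BddBelow (range b) := ⟨0, fun r ⟨k, hk⟩ => hk ▸ norm_nonneg _⟩
  have hconvb : Tendsto b atTop (𝓝 (⨅ k, b k)) := tendsto_atTop_ciInf hbanti hbbdd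
  have hsubb : Tendsto (fun j => b (φ j)) atTop (𝓝 (⨅ k, b k)) := hconvb.comp hφatTop
  have hsubb0 : Tendsto (fun j => b (φ j)) atTop (𝓝 0) := by
    have := (tendsto_iff_dist_tendsto_zero).1 hφtend
    simp only [Function.comp_def, dist_eq_norm] at this
    exact this
  have hinf0 : (⨅ k, b k) = 0 := tendsto_nhds_unique hsubb hsubb0
  rw [tendsto_iff_dist_tendsto_zero]
  simp only [dist_eq_norm]
  rw [← hinf0]
  exact hconvb
end

section
/- Under the hypotheses that P is ρ-weakly convex, f is differentiable with σ-Lipschitz gradient, αρ < 1, and 0 < α < 2/(σ + ρ), the ISTA iterates x^{k+1} = T_α(x^k − α∇f(x^k)) satisfy the monotone descent property D(x^{k+1}) ≤ D(x^k), where D = f + P. -/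
open Set Filter Topology

lemma comb_sq {n : ℕ} (u v w : EuclideanSpace ℝ (Fin n)) (l : ℝ) :
    ‖l • u + (1 - l) • v - w‖ ^ 2
      = l * ‖u - w‖ ^ 2 + (1 - l) * ‖v - w‖ ^ 2 - l * (1 - l) * ‖u - v‖ ^ 2 := by
  have h : l • u + (1 - l) • v - w = l • (u - w) + (1 - l) • (v - w) := by
    module
  rw [h]
  have e : ∀ p : EuclideanSpace ℝ (Fin n), ‖p‖ ^ 2 = inner ℝ p p :=
    fun p => (real_inner_self_eq_norm_sq p).symm
  rw [e, e, e, e]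
  simp only [inner_add_left, inner_add_right, inner_sub_left, inner_sub_right,
    real_inner_smul_left, real_inner_smul_right]
  rw [real_inner_comm v u, real_inner_comm w u, real_inner_comm w v]
  ring

lemma descent_lemma {n : ℕ} (f : EuclideanSpace ℝ (Fin n) → ℝ)
    (f' : EuclideanSpace ℝ (Fin n) → EuclideanSpace ℝ (Fin n))
    (hf' : ∀ x, HasGradientAt f (f' x) x) (σ : ℝ)
    (hlip : ∀ x y, ‖f' x - f' y‖ ≤ σ * ‖x - y‖) (a b : EuclideanSpace ℝ (Fin n)) :
    f b ≤ f a + inner ℝ (f' a) (b - a) + σ / 2 * ‖b - a‖ ^ 2 := by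
  set d := b - a with hd
  set c : ℝ := inner ℝ (f' a) d with hc
  set F : ℝ → ℝ := fun t => f (a + t • d) - t * c - σ * ‖d‖ ^ 2 * t ^ 2 / 2 with hF
  have hh : ∀ t : ℝ, HasDerivAt F
      ((inner ℝ (f' (a + t • d)) d : ℝ) - c - σ * ‖d‖ ^ 2 * t) t := by
    intro t
    have h1 : HasDerivAt (fun t : ℝ => a + t • d) d t := by
      simpa using ((hasDerivAt_id t).smul_const d).const_add a
    have h2 : HasFDerivAt f ((InnerProductSpace.toDual ℝ _) (f' (a + t • d))) (a + t • d) :=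
      hasGradientAt_iff_hasFDerivAt.mp (hf' _)
    have hcurve : HasDerivAt (fun t : ℝ => f (a + t • d)) (inner ℝ (f' (a + t • d)) d : ℝ) t := by
      have h3 := h2.comp_hasDerivAt t h1
      simp at h3
      exact h3
    have := (hcurve.sub ((hasDerivAt_id t).mul_const c)).sub
      (((hasDerivAt_pow 2 t).const_mul (σ * ‖d‖ ^ 2)).div_const 2)
    refine this.congr_deriv ?_
    rw [show (2:ℕ) - 1 = 1 from rfl]; push_cast
    ring
  have anti : AntitoneOn F (Icc (0:ℝ) 1) := by
    apply antitoneOn_of_deriv_nonpos (convex_Icc 0 1)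
    · exact fun t _ => ((hh t).continuousAt).continuousWithinAt
    · exact fun t _ => ((hh t).differentiableAt).differentiableWithinAt
    · intro t ht
      rw [interior_Icc] at ht
      rw [(hh t).deriv]
      have h3 : (inner ℝ (f' (a + t • d)) d : ℝ) - c = inner ℝ (f' (a + t • d) - f' a) d := by
        rw [inner_sub_left]
      have h4 : (inner ℝ (f' (a + t • d) - f' a) d : ℝ) ≤ σ * ‖d‖ ^ 2 * t := by
        calc (inner ℝ (f' (a + t • d) - f' a) d : ℝ) ≤ ‖f' (a + t • d) - f' a‖ * ‖d‖ :=
              real_inner_le_norm _ _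
          _ ≤ σ * ‖a + t • d - a‖ * ‖d‖ := by
              have := hlip (a + t • d) a
              nlinarith [norm_nonneg d, norm_nonneg (f' (a + t • d) - f' a)]
          _ = σ * ‖d‖ ^ 2 * t := by
              rw [add_sub_cancel_left, norm_smul, Real.norm_eq_abs, abs_of_pos ht.1]; ring
      linarith [h3 ▸ h4]
  have key := anti (left_mem_Icc.mpr zero_le_one) (right_mem_Icc.mpr zero_le_one) zero_le_one
  simp only [hF, one_smul, zero_smul, add_zero, one_pow, mul_one] at key
  have hb : a + d = b := by rw [hd]; abel
  rw [hb] at key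
  linarith

lemma strong_min {n : ℕ} (P : EuclideanSpace ℝ (Fin n) → ℝ) (ρ α : ℝ)
    (hweak : ConvexOn ℝ univ (fun x => P x + ρ / 2 * ‖x‖ ^ 2))
    (hα : 0 < α)
    (T : EuclideanSpace ℝ (Fin n) → EuclideanSpace ℝ (Fin n))
    (hT : ∀ z t, 1 / (2 * α) * ‖T z - z‖ ^ 2 + P (T z) ≤ 1 / (2 * α) * ‖t - z‖ ^ 2 + P t)
    (z t : EuclideanSpace ℝ (Fin n)) :
    1 / (2 * α) * ‖T z - z‖ ^ 2 + P (T z) + (1 / α - ρ) / 2 * ‖t - T z‖ ^ 2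
      ≤ 1 / (2 * α) * ‖t - z‖ ^ 2 + P t := by
  set y := T z with hy
  set c := ‖t - y‖ ^ 2 with hcdef
  have hc0 : 0 ≤ c := by positivity
  set s := 1 / (2 * α) with hs
  have hsρ : s - ρ / 2 = (1 / α - ρ) / 2 := by
    rw [hs]; field_simp
  have main : ∀ l ∈ Ioo (0:ℝ) 1,
      s * ‖y - z‖ ^ 2 + P y + (1 / α - ρ) / 2 * ((1 - l) * c)
        ≤ s * ‖t - z‖ ^ 2 + P t := by
    intro l hl
    set u := l • t + (1 - l) • y with hu
    have hQ : P u + ρ / 2 * ‖u‖ ^ 2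
        ≤ l * (P t + ρ / 2 * ‖t‖ ^ 2) + (1 - l) * (P y + ρ / 2 * ‖y‖ ^ 2) :=
      hweak.2 (mem_univ t) (mem_univ y) (le_of_lt hl.1) (by linarith [hl.2]) (by ring)
    have h1 : ‖u - z‖ ^ 2 = l * ‖t - z‖ ^ 2 + (1 - l) * ‖y - z‖ ^ 2 - l * (1 - l) * c := by
      rw [hu, comb_sq]
    have h2 : ‖u‖ ^ 2 = l * ‖t‖ ^ 2 + (1 - l) * ‖y‖ ^ 2 - l * (1 - l) * c := by
      have := comb_sq t y 0 l
      simpa [hcdef] using this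
    have hTu := hT z u
    rw [← hy, h1] at hTu
    have hQ' : P u ≤ l * P t + (1 - l) * P y + ρ / 2 * (l * (1 - l) * c) := by
      rw [h2] at hQ; nlinarith [hQ]
    have key2 : l * (s * ‖y - z‖ ^ 2 + P y + (s - ρ / 2) * ((1 - l) * c))
        ≤ l * (s * ‖t - z‖ ^ 2 + P t) := by
      nlinarith [hTu, hQ']
    have key3 := (mul_le_mul_iff_right₀ hl.1).mp key2
    linarith [hsρ ▸ key3]
  have hev : ∀ᶠ l in 𝓝[>] (0:ℝ),
      s * ‖y - z‖ ^ 2 + P y + (1 / α - ρ) / 2 * ((1 - l) * c)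
        ≤ s * ‖t - z‖ ^ 2 + P t := by
    filter_upwards [Ioo_mem_nhdsGT_of_mem (show (0:ℝ) ∈ Ico (0:ℝ) 1 by norm_num)] with l hl
    exact main l hl
  have hcont : Continuous (fun l : ℝ =>
      s * ‖y - z‖ ^ 2 + P y + (1 / α - ρ) / 2 * ((1 - l) * c)) := by fun_prop
  have htend := ((hcont.tendsto 0).mono_left (nhdsWithin_le_nhds (s := Ioi (0:ℝ))))
  have hlim := le_of_tendsto htend hev
  simp only [sub_zero, one_mul] at hlim
  linarith [hlim]

theorem ista_monotone_descent
    (n : ℕ)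
    (P f : EuclideanSpace ℝ (Fin n) → ℝ)
    (f' : EuclideanSpace ℝ (Fin n) → EuclideanSpace ℝ (Fin n))
    (hf' : ∀ x, HasGradientAt f (f' x) x)
    (ρ σ α : ℝ) (hρ : 0 ≤ ρ)
    (hweak : ConvexOn ℝ univ (fun x => P x + ρ / 2 * ‖x‖ ^ 2))
    (hlip : ∀ x y, ‖f' x - f' y‖ ≤ σ * ‖x - y‖)
    (hα : 0 < α) (hαρ : α * ρ < 1) (hα2 : α < 2 / (σ + ρ))
    (T : EuclideanSpace ℝ (Fin n) → EuclideanSpace ℝ (Fin n))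
    (hT : ∀ z t, 1 / (2 * α) * ‖T z - z‖ ^ 2 + P (T z) ≤ 1 / (2 * α) * ‖t - z‖ ^ 2 + P t)
    (x : ℕ → EuclideanSpace ℝ (Fin n))
    (hrec : ∀ k, x (k + 1) = T (x k - α • f' (x k))) :
    ∀ k, f (x (k + 1)) + P (x (k + 1)) ≤ f (x k) + P (x k) := by
  -- basic facts about the step size
  have hsum : 0 < σ + ρ := by
    by_contra h
    push_neg at h
    have := div_nonpos_of_nonneg_of_nonpos (by norm_num : (0:ℝ) ≤ 2) h
    linarith
  have hασρ : α * (σ + ρ) < 2 := by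
    have := (lt_div_iff₀ hsum).mp hα2
    linarith
  intro k
  set z := x k - α • f' (x k) with hz
  have hb : x (k + 1) = T z := hrec k
  have hstrong := strong_min P ρ α hweak hα T hT z (x k)
  rw [← hb] at hstrong
  set b := x (k + 1) with hbdef
  set I : ℝ := inner ℝ (b - x k) (f' (x k)) with hI
  set D := ‖b - x k‖ ^ 2 with hD
  have hD0 : 0 ≤ D := by positivity
  have e2 : b - z = (b - x k) + α • f' (x k) := by rw [hz]; abel
  have eN : ‖b - z‖ ^ 2 = D + 2 * (α * I) + α ^ 2 * ‖f' (x k)‖ ^ 2 := by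
    rw [e2, norm_add_sq_real, real_inner_smul_right, norm_smul, Real.norm_eq_abs,
      mul_pow, sq_abs, hD, hI]
    try ring
  have eA : ‖x k - z‖ ^ 2 = α ^ 2 * ‖f' (x k)‖ ^ 2 := by
    have : x k - z = α • f' (x k) := by rw [hz]; abel
    rw [this, norm_smul, Real.norm_eq_abs, mul_pow, sq_abs]
  have eB : ‖x k - b‖ ^ 2 = D := by rw [hD, norm_sub_rev]
  rw [eN, eA, eB] at hstrong
  have c1 : 1 / (2 * α) * (2 * (α * I)) = I := by field_simp; try ring
  have key : P b + I + (1 / (2 * α) + (1 / α - ρ) / 2) * D ≤ P (x k) := by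
    nlinarith [hstrong, c1]
  have edesc := descent_lemma f f' hf' σ hlip (x k) b
  have hIc : (inner ℝ (f' (x k)) (b - x k) : ℝ) = I := by rw [hI, real_inner_comm]
  rw [hIc, ← hD] at edesc
  have hcoef : σ / 2 ≤ 1 / (2 * α) + (1 / α - ρ) / 2 := by
    have heq : 1 / (2 * α) + (1 / α - ρ) / 2 = (2 / α - ρ) / 2 := by
      field_simp
      try ring
    have h2 : σ + ρ ≤ 2 / α := by
      rw [le_div_iff₀ hα]
      nlinarith [hασρ]
    rw [heq]
    linarith
  have hprod : σ / 2 * D ≤ (1 / (2 * α) + (1 / α - ρ) / 2) * D :=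
    mul_le_mul_of_nonneg_right hcoef hD0
  linarith [edesc, key, hprod]
end

section
/- For a linear map H and 0 < α with ασ_M < 1 where σ_M is the largest eigenvalue of HᵀH, the surrogate M(x, x^k) = C(x) + (1/2)⟨x − x^k, (α⁻¹I − HᵀH)(x − x^k)⟩ majorizes C: M(x, x^k) ≥ C(x) for all x, with equality at x = x^k; consequently the MM iterate x^{k+1} = argmin_x M(x, x^k) satisfies C(x^{k+1}) ≤ C(x^k). -/
open Set

theorem mm_surrogate_majorizes_and_descends
    (n m : ℕ)
    (H : EuclideanSpace ℝ (Fin n) →ₗ[ℝ] EuclideanSpace ℝ (Fin m))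
    (y : EuclideanSpace ℝ (Fin m))
    (P : EuclideanSpace ℝ (Fin n) → ℝ)
    (σm σM ρ α : ℝ)
    (heig_lo : ∀ x : EuclideanSpace ℝ (Fin n), σm * ‖x‖ ^ 2 ≤ (inner ℝ (H x) (H x) : ℝ))
    (heig_hi : ∀ x : EuclideanSpace ℝ (Fin n), (inner ℝ (H x) (H x) : ℝ) ≤ σM * ‖x‖ ^ 2)
    (hρ0 : 0 ≤ ρ) (hρσ : ρ ≤ σm)
    (hweak : ConvexOn ℝ univ (fun x => P x + ρ / 2 * ‖x‖ ^ 2))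
    (hα : 0 < α) (hασ : α * σM < 1)
    (C : EuclideanSpace ℝ (Fin n) → ℝ)
    (hC : ∀ x, C x = 1 / 2 * ‖y - H x‖ ^ 2 + P x)
    (Msur : EuclideanSpace ℝ (Fin n) → EuclideanSpace ℝ (Fin n) → ℝ)
    (hM : ∀ x z, Msur x z =
      C x + 1 / 2 * (α⁻¹ * ‖x - z‖ ^ 2 - (inner ℝ (H (x - z)) (H (x - z)) : ℝ)))
    (xk : EuclideanSpace ℝ (Fin n)) :
    (∀ x, C x ≤ Msur x xk) ∧ Msur xk xk = C xk ∧
      ∀ x1, (∀ x, Msur x1 xk ≤ Msur x xk) → C x1 ≤ C xk := by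
  have key : ∀ v : EuclideanSpace ℝ (Fin n),
      0 ≤ α⁻¹ * ‖v‖ ^ 2 - (inner ℝ (H v) (H v) : ℝ) := by
    intro v
    have h1 := heig_hi v
    have hσα : σM < α⁻¹ := by
      rw [← one_div]
      exact (lt_div_iff₀ hα).mpr (by linarith [mul_comm α σM])
    nlinarith [sq_nonneg ‖v‖]
  have hmaj : ∀ x, C x ≤ Msur x xk := by
    intro x
    rw [hM]
    linarith [key (x - xk)]
  refine ⟨hmaj, ?_, ?_⟩
  · rw [hM]
    simp
  · intro x1 hmin
    have h1 : C x1 ≤ Msur x1 xk := hmaj x1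
    have h2 : Msur x1 xk ≤ Msur xk xk := hmin xk
    have h3 : Msur xk xk = C xk := by rw [hM]; simp
    linarith
end

section
/- Under the hypotheses of the MM setup (P ρ-weakly convex with ρ ≤ σₘ, σ_M < 1/α, x^{k+1} = T_α(x^k + αHᵀ(y − Hx^k))), for any x: M(x, x^k) − M(x^{k+1}, x^k) ≥ (1/(2α) − ρ/2)‖x − x^{k+1}‖² ≥ g(x, x^{k+1}), where g(x, z) = (1/2)⟨x − z, (α⁻¹I − HᵀH)(x − z)⟩ and M(x, z) = C(x) + g(x, z). -/
open Set

theorem mm_limit_aux {K D : ℝ} (h : ∀ l : ℝ, 0 < l → l < 1 → K - l * K ≤ D) :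
    D ≥ K := by
  by_contra hcon
  push_neg at hcon
  have hδ : 0 < K - D := by linarith
  have hpos : (0:ℝ) < 2 * (|K| + 1) := by positivity
  have hl0 : 0 < min (1/2) ((K - D) / (2 * (|K| + 1))) :=
    lt_min (by norm_num) (div_pos hδ hpos)
  have hl1 : min (1/2) ((K - D) / (2 * (|K| + 1))) < 1 :=
    lt_of_le_of_lt (min_le_left _ _) (by norm_num)
  have hh := h _ hl0 hl1
  have e : (K - D) / (2 * (|K| + 1)) * |K| ≤ (K - D) / 2 := by
    rw [div_mul_eq_mul_div, div_le_div_iff₀ hpos (by norm_num)]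
    nlinarith [abs_nonneg K]
  have h2 : min (1/2) ((K - D) / (2 * (|K| + 1))) * |K| ≤ (K - D) / 2 :=
    le_trans (mul_le_mul_of_nonneg_right (min_le_right _ _) (abs_nonneg K)) e
  have h3 : min (1/2) ((K - D) / (2 * (|K| + 1))) * K ≤ (K - D) / 2 := by
    have h4 : min (1/2) ((K - D) / (2 * (|K| + 1))) * K
        ≤ |min (1/2) ((K - D) / (2 * (|K| + 1))) * K| := le_abs_self _
    rw [abs_mul, abs_of_pos hl0] at h4
    linarith
  linarith



theorem mm_summa_key_inequality
    (n m : ℕ)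
    (H : EuclideanSpace ℝ (Fin n) →ₗ[ℝ] EuclideanSpace ℝ (Fin m))
    (y : EuclideanSpace ℝ (Fin m))
    (P : EuclideanSpace ℝ (Fin n) → ℝ)
    (σm σM ρ α : ℝ)
    (heig_lo : ∀ x : EuclideanSpace ℝ (Fin n), σm * ‖x‖ ^ 2 ≤ (inner ℝ (H x) (H x) : ℝ))
    (heig_hi : ∀ x : EuclideanSpace ℝ (Fin n), (inner ℝ (H x) (H x) : ℝ) ≤ σM * ‖x‖ ^ 2)
    (hρ0 : 0 ≤ ρ) (hρσ : ρ ≤ σm)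
    (hweak : ConvexOn ℝ univ (fun x => P x + ρ / 2 * ‖x‖ ^ 2))
    (hα : 0 < α) (hασ : α * σM < 1)
    (C : EuclideanSpace ℝ (Fin n) → ℝ)
    (hC : ∀ x, C x = 1 / 2 * ‖y - H x‖ ^ 2 + P x)
    (g : EuclideanSpace ℝ (Fin n) → EuclideanSpace ℝ (Fin n) → ℝ)
    (hg : ∀ x z, g x z =
      1 / 2 * (α⁻¹ * ‖x - z‖ ^ 2 - (inner ℝ (H (x - z)) (H (x - z)) : ℝ)))
    (Msur : EuclideanSpace ℝ (Fin n) → EuclideanSpace ℝ (Fin n) → ℝ)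
    (hM : ∀ x z, Msur x z = C x + g x z)
    (T : EuclideanSpace ℝ (Fin n) → EuclideanSpace ℝ (Fin n))
    (hT : ∀ z t, 1 / (2 * α) * ‖T z - z‖ ^ 2 + P (T z) ≤ 1 / (2 * α) * ‖t - z‖ ^ 2 + P t)
    (xk xk1 : EuclideanSpace ℝ (Fin n))
    (hxk1 : xk1 = T (xk + α • (LinearMap.adjoint H) (y - H xk))) :
    ∀ x, Msur x xk - Msur xk1 xk ≥ (1 / (2 * α) - ρ / 2) * ‖x - xk1‖ ^ 2 ∧
      (1 / (2 * α) - ρ / 2) * ‖x - xk1‖ ^ 2 ≥ g x xk1 := by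
  intro x
  have hαne : α ≠ 0 := ne_of_gt hα
  set a : EuclideanSpace ℝ (Fin n) := (LinearMap.adjoint H) (y - H xk) with ha
  set z : EuclideanSpace ℝ (Fin n) := xk + α • a with hzdef
  have hxk1' : xk1 = T z := hxk1
  -- key expansion
  have hexp : ∀ t, Msur t xk = 1/(2*α) * ‖t - z‖^2 + P t
      + (1/2*‖y - H xk‖^2 - α/2*‖a‖^2) := by
    intro t
    have h1 : t - z = (t - xk) - α • a := by rw [hzdef]; abel
    have h2 : y - H t = (y - H xk) - H (t - xk) := by rw [map_sub]; abel
    have e1 : ‖t - z‖^2 = ‖t - xk‖^2 - 2*(α * (inner ℝ (H (t - xk)) (y - H xk) : ℝ))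
        + α^2 * ‖a‖^2 := by
      rw [h1, norm_sub_sq_real, real_inner_smul_right, norm_smul, Real.norm_eq_abs,
        mul_pow, sq_abs, ha, LinearMap.adjoint_inner_right]
    have e2 : ‖y - H t‖^2 = ‖y - H xk‖^2 - 2*(inner ℝ (y - H xk) (H (t - xk)) : ℝ)
        + ‖H (t - xk)‖^2 := by
      rw [h2, norm_sub_sq_real]
    rw [hM, hC, hg, real_inner_self_eq_norm_sq, e1, e2,
      real_inner_comm (y - H xk) (H (t - xk))]
    field_simp
    ring
  have hmin : ∀ t, Msur xk1 xk ≤ Msur t xk := by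
    intro t
    have h := hT z t
    rw [← hxk1'] at h
    rw [hexp t, hexp xk1]
    linarith
  -- quadratic combination identity
  have hcomb : ∀ (l : ℝ), 0 ≤ l → l ≤ 1 → ∀ (u v w : EuclideanSpace ℝ (Fin n)),
      ‖(l•u + (1-l)•v) - w‖^2
        = l*‖u-w‖^2 + (1-l)*‖v-w‖^2 - l*(1-l)*‖u-v‖^2 := by
    intro l hl0 hl1 u v w
    have h1 : (l•u + (1-l)•v) - w = l•(u-w) + (1-l)•(v-w) := by
      have hw : l•w + (1-l)•w = w := by rw [← add_smul]; simp
      have h1' : l•u + (1-l)•v - (l•w + (1-l)•w) = l•(u-w) + (1-l)•(v-w) := by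
        rw [smul_sub, smul_sub]; abel
      rw [hw] at h1'; exact h1'
    have h2 : u - v = (u - w) - (v - w) := by abel
    rw [h1, h2, norm_add_sq_real, norm_sub_sq_real (u-w) (v-w),
      real_inner_smul_left, real_inner_smul_right]
    simp only [norm_smul, Real.norm_eq_abs, abs_of_nonneg hl0,
      abs_of_nonneg (by linarith : (0:ℝ) ≤ 1 - l)]
    ring
  -- strong convexity step
  have hstep : ∀ l : ℝ, 0 < l → l < 1 →
      (1/(2*α) - ρ/2) * ‖x - xk1‖^2 - l * ((1/(2*α) - ρ/2) * ‖x - xk1‖^2)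
        ≤ Msur x xk - Msur xk1 xk := by
    intro l hl0 hl1
    have hl1' : (0:ℝ) ≤ 1 - l := by linarith
    have hQ : P (l•x + (1-l)•xk1) + ρ/2*‖l•x + (1-l)•xk1‖^2
        ≤ l*(P x + ρ/2*‖x‖^2) + (1-l)*(P xk1 + ρ/2*‖xk1‖^2) := by
      have := hweak.2 (mem_univ x) (mem_univ xk1) hl0.le hl1' (by ring)
      simpa using this
    have hidm := hcomb l hl0.le hl1.le x xk1 z
    have hidm0 : ‖l•x + (1-l)•xk1‖^2
        = l*‖x‖^2 + (1-l)*‖xk1‖^2 - l*(1-l)*‖x-xk1‖^2 := by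
      have := hcomb l hl0.le hl1.le x xk1 0
      simpa using this
    have hmin_m := hmin (l•x + (1-l)•xk1)
    rw [hexp (l•x + (1-l)•xk1), hexp xk1] at hmin_m
    have A1 : l * (1/(2*α) * ‖xk1 - z‖^2 + P xk1 + (1/2*‖y - H xk‖^2 - α/2*‖a‖^2))
        ≤ l * (1/(2*α) * ‖(l•x + (1-l)•xk1) - z‖^2 + P (l•x + (1-l)•xk1)
          + (1/2*‖y - H xk‖^2 - α/2*‖a‖^2)) :=
      mul_le_mul_of_nonneg_left hmin_m hl0.le
    have A2 : l * (P (l•x + (1-l)•xk1) + ρ/2*‖l•x + (1-l)•xk1‖^2)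
        ≤ l * (l*(P x + ρ/2*‖x‖^2) + (1-l)*(P xk1 + ρ/2*‖xk1‖^2)) :=
      mul_le_mul_of_nonneg_left hQ hl0.le
    have A3 : l * (1/(2*α) * ‖(l•x + (1-l)•xk1) - z‖^2)
        = l * (l*(1/(2*α)*‖x-z‖^2) + (1-l)*(1/(2*α)*‖xk1-z‖^2)
          - l*(1-l)*(1/(2*α)*‖x-xk1‖^2)) := by rw [hidm]; ring
    have A4 : l * (ρ/2 * ‖l•x + (1-l)•xk1‖^2)
        = l * (l*(ρ/2*‖x‖^2) + (1-l)*(ρ/2*‖xk1‖^2)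
          - l*(1-l)*(ρ/2*‖x-xk1‖^2)) := by rw [hidm0]; ring
    have hll : (0:ℝ) < l * l := mul_pos hl0 hl0
    have hkey : (l*l) * ((1-l) * ((1/(2*α) - ρ/2) * ‖x - xk1‖^2))
        ≤ (l*l) * ((1/(2*α)*‖x-z‖^2 + P x) - (1/(2*α)*‖xk1-z‖^2 + P xk1)) := by
      linarith [A1, A2, A3, A4]
    have hkey2 : (1-l) * ((1/(2*α) - ρ/2) * ‖x - xk1‖^2)
        ≤ (1/(2*α)*‖x-z‖^2 + P x) - (1/(2*α)*‖xk1-z‖^2 + P xk1) :=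
      (mul_le_mul_iff_right₀ hll).mp hkey
    rw [hexp x, hexp xk1]
    linarith [hkey2]
  constructor
  · exact mm_limit_aux hstep
  · -- second inequality
    rw [hg]
    have h1 := heig_lo (x - xk1)
    have h2 : ρ * ‖x - xk1‖^2 ≤ σm * ‖x - xk1‖^2 :=
      mul_le_mul_of_nonneg_right hρσ (sq_nonneg _)
    have h3 : (1:ℝ)/(2*α) = 1/2 * α⁻¹ := by ring
    rw [h3]
    linarith [h1, h2]
end
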